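/- arXiv:0904.3783 — 3 statements merged into one kernel-verified Lean document; each statement's English description precedes it below -/
import Mathlib

section
/- Let {P_n} be an operator system structure on an AOU space (V,V^+,e) and let P_n^d := {f : M_n(V) → ℂ linear with f(P_n) ⊆ ℝ^+}. Then each f ∈ P_n^d, identified with the matrix (f_{ij}) where f_{ij}(v) = f(v ⊗ E_{ij}), has entries f_{ij} that are continuous linear functionals on V, and {P_n^d} is a matrix ordering on the dual space V′ with P_1^d = (V^+)^d. -/
open scoped ComplexOrder
open Finset

noncomputable section

section Defs
variable {V : Type*} [AddCommGroup V] [Module ℂ V]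

/-- The elementary tensor `a ⊗ v` in `M_n(V) ≅ M_n(ℂ) ⊗ V`. -/
def eTensor {n : ℕ} (a : Matrix (Fin n) (Fin n) ℂ) (v : V) : Matrix (Fin n) (Fin n) V :=
  Matrix.of fun p q => a p q • v

/-- The conjugation `X* A X` of `A ∈ M_n(V)` by a scalar matrix `X ∈ M_{n,m}(ℂ)`. -/
def mconj {n m : ℕ} (X : Matrix (Fin n) (Fin m) ℂ) (A : Matrix (Fin n) (Fin n) V) :
    Matrix (Fin m) (Fin m) V :=
  Matrix.of fun i j => ∑ k, ∑ l, (star (X k i) * X l j) • A k l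

/-- The diagonal matrix `e_n` with `e` in each diagonal entry. -/
def eMat (e : V) (n : ℕ) : Matrix (Fin n) (Fin n) V :=
  Matrix.of fun i j => if i = j then e else 0

/-- The minimal cone `C_n^min(V)`. -/
def Cmin (pos : Set V) (n : ℕ) : Set (Matrix (Fin n) (Fin n) V) :=
  {M | ∀ lam : Fin n → ℂ, (∑ i, ∑ j, (star (lam i) * lam j) • M i j) ∈ pos}

/-- The cone `D_n^max(V)` of sums of tensors `a ⊗ v` with `a ∈ M_n⁺`, `v ∈ V⁺`. -/
def Dmax (pos : Set V) (n : ℕ) : Set (Matrix (Fin n) (Fin n) V) :=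
  {M | ∃ (k : ℕ) (a : Fin k → Matrix (Fin n) (Fin n) ℂ) (v : Fin k → V),
    (∀ i, (a i).PosSemidef) ∧ (∀ i, v i ∈ pos) ∧ M = ∑ i, eTensor (a i) (v i)}

/-- The maximal cone `C_n^max(V)`: the Archimedeanization of `D_n^max(V)`. -/
def Cmax (pos : Set V) (e : V) (n : ℕ) : Set (Matrix (Fin n) (Fin n) V) :=
  {M | ∀ r : ℝ, 0 < r → (r : ℂ) • eMat e n + M ∈ Dmax pos n}

end Defs

section StarDefs
variable {V : Type*} [AddCommGroup V] [Module ℂ V] [StarAddMonoid V] [StarModule ℂ V]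

/-- `(V, pos)` is an ordered `*`-vector space. -/
def IsOrderedStar (pos : Set V) : Prop :=
  (∀ v ∈ pos, star v = v) ∧
  (∀ r : ℝ, 0 ≤ r → ∀ v ∈ pos, (r : ℂ) • v ∈ pos) ∧
  (∀ v ∈ pos, ∀ w ∈ pos, v + w ∈ pos) ∧
  (∀ v ∈ pos, -v ∈ pos → v = 0)

/-- `(V, pos, e)` is an Archimedean order unit (AOU) space. -/
def IsAOU (pos : Set V) (e : V) : Prop :=
  IsOrderedStar pos ∧ star e = e ∧
  (∀ v : V, star v = v → ∃ r : ℝ, 0 < r ∧ (r : ℂ) • e - v ∈ pos) ∧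
  (∀ v : V, (∀ r : ℝ, 0 < r → (r : ℂ) • e + v ∈ pos) → v ∈ pos)

/-- A state on `(V, pos, e)`: a unital positive linear functional. -/
def IsState (pos : Set V) (e : V) (s : V →ₗ[ℂ] ℂ) : Prop :=
  s e = 1 ∧ ∀ v ∈ pos, 0 ≤ s v

/-- A positive linear functional. -/
def IsPosFunc (pos : Set V) (f : V →ₗ[ℂ] ℂ) : Prop := ∀ v ∈ pos, 0 ≤ f v

/-- A matrix ordering on the `*`-vector space `V`. -/
def IsMatrixOrdering (C : ∀ n : ℕ, Set (Matrix (Fin n) (Fin n) V)) : Prop :=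
  (∀ (n : ℕ) (M : Matrix (Fin n) (Fin n) V), M ∈ C n → star M = M) ∧
  (∀ (n : ℕ) (r : ℝ), 0 ≤ r → ∀ M ∈ C n, (r : ℂ) • M ∈ C n) ∧
  (∀ n : ℕ, ∀ M ∈ C n, ∀ N ∈ C n, M + N ∈ C n) ∧
  (∀ n : ℕ, ∀ M ∈ C n, -M ∈ C n → M = 0) ∧
  (∀ (n m : ℕ) (X : Matrix (Fin n) (Fin m) ℂ), ∀ M ∈ C n, mconj X M ∈ C m)

/-- `e` is a matrix order unit for the family `C`. -/
def IsMatrixOrderUnit (C : ∀ n : ℕ, Set (Matrix (Fin n) (Fin n) V)) (e : V) : Prop :=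
  star e = e ∧
  ∀ (n : ℕ) (M : Matrix (Fin n) (Fin n) V), star M = M →
    ∃ r : ℝ, 0 < r ∧ (r : ℂ) • eMat e n - M ∈ C n

/-- `e` is an Archimedean matrix order unit for the family `C`. -/
def IsArchMatrixOrderUnit (C : ∀ n : ℕ, Set (Matrix (Fin n) (Fin n) V)) (e : V) : Prop :=
  IsMatrixOrderUnit C e ∧
  ∀ (n : ℕ) (M : Matrix (Fin n) (Fin n) V),
    (∀ r : ℝ, 0 < r → (r : ℂ) • eMat e n + M ∈ C n) → M ∈ C n

/-- `(V, C, e)` is an (abstract) operator system. -/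
def IsOperatorSystem (C : ∀ n : ℕ, Set (Matrix (Fin n) (Fin n) V)) (e : V) : Prop :=
  IsMatrixOrdering C ∧ IsArchMatrixOrderUnit C e

/-- The ground-level cone of a matrix ordering, under `M_1(V) ≅ V`. -/
def groundPos (C : ∀ n : ℕ, Set (Matrix (Fin n) (Fin n) V)) : Set V :=
  {v | (Matrix.of fun _ _ : Fin 1 => v) ∈ C 1}

/-- An operator system structure on the AOU space `(V, pos, e)`. -/
def IsOpSysStructure (pos : Set V) (e : V) (C : ∀ n : ℕ, Set (Matrix (Fin n) (Fin n) V)) :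
    Prop :=
  IsOperatorSystem C e ∧ C 1 = {M | M 0 0 ∈ pos}

end StarDefs

section DualDefs
variable {V : Type*} [AddCommGroup V] [Module ℂ V] [StarAddMonoid V] [StarModule ℂ V]

/-- The adjoint functional `f*` with `f*(v) = conj (f (v*))`. -/
def starFunc (f : V →ₗ[ℂ] ℂ) : V →ₗ[ℂ] ℂ where
  toFun v := star (f (star v))
  map_add' v w := by simp
  map_smul' c v := by simp [star_smul, map_smul, mul_comm]

/-- The pairing between a matrix of functionals and a matrix over `V`:
`(f_{ij})((v_{ij})) = ∑_{ij} f_{ij}(v_{ij})`. -/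
def dPair {n : ℕ} (F : Matrix (Fin n) (Fin n) (V →ₗ[ℂ] ℂ))
    (A : Matrix (Fin n) (Fin n) V) : ℂ :=
  ∑ i, ∑ j, F i j (A i j)

/-- The dual cones `P_n^d` of a matrix ordering on `V`. -/
def dualCones (P : ∀ n : ℕ, Set (Matrix (Fin n) (Fin n) V)) (n : ℕ) :
    Set (Matrix (Fin n) (Fin n) (V →ₗ[ℂ] ℂ)) :=
  {F | ∀ A ∈ P n, 0 ≤ dPair F A}

/-- The predual cones `^dQ_n` of a matrix ordering on `V'`. -/
def preCones (Q : ∀ n : ℕ, Set (Matrix (Fin n) (Fin n) (V →ₗ[ℂ] ℂ))) (n : ℕ) :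
    Set (Matrix (Fin n) (Fin n) V) :=
  {A | ∀ F ∈ Q n, 0 ≤ dPair F A}

/-- A matrix ordering on the dual space `V'` (hermitian via `starFunc`,
compatibility under conjugation by scalar matrices). -/
def IsDualMatrixOrdering (Q : ∀ n : ℕ, Set (Matrix (Fin n) (Fin n) (V →ₗ[ℂ] ℂ))) : Prop :=
  (∀ (n : ℕ) (F : Matrix (Fin n) (Fin n) (V →ₗ[ℂ] ℂ)), F ∈ Q n →
    ∀ i j, F i j = starFunc (F j i)) ∧
  (∀ (n : ℕ) (r : ℝ), 0 ≤ r → ∀ F ∈ Q n, (r : ℂ) • F ∈ Q n) ∧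
  (∀ n : ℕ, ∀ F ∈ Q n, ∀ G ∈ Q n, F + G ∈ Q n) ∧
  (∀ n : ℕ, ∀ F ∈ Q n, -F ∈ Q n → F = 0) ∧
  (∀ (n m : ℕ) (X : Matrix (Fin n) (Fin m) ℂ), ∀ F ∈ Q n, mconj X F ∈ Q m)

/-- Weak*-closedness of a set of matrices of functionals: closedness in the topology
induced by the pairing against all of `M_n(V)`, with the topology of pointwise convergence. -/
def WeakStarClosed {n : ℕ} (Q : Set (Matrix (Fin n) (Fin n) (V →ₗ[ℂ] ℂ))) : Prop :=
  @IsClosed _ (TopologicalSpace.induced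
    (fun F : Matrix (Fin n) (Fin n) (V →ₗ[ℂ] ℂ) => fun A => dPair F A)
    Pi.topologicalSpace) Q

/-- The minimal norm on an AOU space: `‖v‖_m = sup { |s(v)| : s a state }`. -/
def minNorm (pos : Set V) (e : V) (v : V) : ℝ :=
  ⨆ s : {s : V →ₗ[ℂ] ℂ // IsState pos e s}, ‖s.1 v‖

/-- Bounded (continuous) linear functionals on `V`. -/
def IsBddFunc (pos : Set V) (e : V) (f : V →ₗ[ℂ] ℂ) : Prop :=
  ∃ c : ℝ, ∀ v, ‖f v‖ ≤ c * minNorm pos e v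

end DualDefs

end

section Helpers
variable {V : Type*} [AddCommGroup V] [Module ℂ V]

lemma OSD_sum_swap_4 {ι κ : Type*} [Fintype ι] [Fintype κ] {M : Type*} [AddCommMonoid M]
    (t : ι → ι → κ → κ → M) :
    ∑ i, ∑ j, ∑ k, ∑ l, t i j k l = ∑ k, ∑ l, ∑ i, ∑ j, t i j k l := by
  calc ∑ i, ∑ j, ∑ k, ∑ l, t i j k l
      = ∑ i, ∑ k, ∑ j, ∑ l, t i j k l :=
        Finset.sum_congr rfl fun i _ => Finset.sum_comm
    _ = ∑ k, ∑ i, ∑ j, ∑ l, t i j k l := Finset.sum_comm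
    _ = ∑ k, ∑ i, ∑ l, ∑ j, t i j k l :=
        Finset.sum_congr rfl fun k _ => Finset.sum_congr rfl fun i _ => Finset.sum_comm
    _ = ∑ k, ∑ l, ∑ i, ∑ j, t i j k l :=
        Finset.sum_congr rfl fun k _ => Finset.sum_comm

lemma OSD_dPair_addA {n : ℕ} (F : Matrix (Fin n) (Fin n) (V →ₗ[ℂ] ℂ)) (A B) :
    dPair F (A + B) = dPair F A + dPair F B := by
  simp [dPair, Matrix.add_apply, Finset.sum_add_distrib]

lemma OSD_dPair_subA {n : ℕ} (F : Matrix (Fin n) (Fin n) (V →ₗ[ℂ] ℂ)) (A B) :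
    dPair F (A - B) = dPair F A - dPair F B := by
  simp [dPair, Matrix.sub_apply, Finset.sum_sub_distrib]

lemma OSD_dPair_smulA {n : ℕ} (F : Matrix (Fin n) (Fin n) (V →ₗ[ℂ] ℂ)) (c : ℂ) (A) :
    dPair F (c • A) = c * dPair F A := by
  simp [dPair, Matrix.smul_apply, map_smul, smul_eq_mul, Finset.mul_sum]

lemma OSD_dPair_subF {n : ℕ} (F G : Matrix (Fin n) (Fin n) (V →ₗ[ℂ] ℂ)) (A) :
    dPair (F - G) A = dPair F A - dPair G A := by
  simp [dPair, Matrix.sub_apply, LinearMap.sub_apply, Finset.sum_sub_distrib]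

lemma OSD_dPair_negF {n : ℕ} (F : Matrix (Fin n) (Fin n) (V →ₗ[ℂ] ℂ)) (A) :
    dPair (-F) A = - dPair F A := by
  simp [dPair, Matrix.neg_apply, LinearMap.neg_apply]

lemma OSD_dPair_smulF {n : ℕ} (F : Matrix (Fin n) (Fin n) (V →ₗ[ℂ] ℂ)) (c : ℂ) (A) :
    dPair (c • F) A = c * dPair F A := by
  simp [dPair, Matrix.smul_apply, LinearMap.smul_apply, smul_eq_mul, Finset.mul_sum]

lemma OSD_dPair_addF {n : ℕ} (F G : Matrix (Fin n) (Fin n) (V →ₗ[ℂ] ℂ)) (A) :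
    dPair (F + G) A = dPair F A + dPair G A := by
  simp [dPair, Matrix.add_apply, LinearMap.add_apply, Finset.sum_add_distrib]

/-- single-entry matrix -/
def OSD_msingle {n : ℕ} (i j : Fin n) (v : V) : Matrix (Fin n) (Fin n) V :=
  Matrix.of fun p q => if p = i ∧ q = j then v else 0

lemma OSD_dPair_msingle {n : ℕ} (F : Matrix (Fin n) (Fin n) (V →ₗ[ℂ] ℂ)) (i j : Fin n) (v : V) :
    dPair F (OSD_msingle i j v) = F i j v := by
  have h : ∀ p q, F p q ((OSD_msingle i j v) p q)
      = if p = i then (if q = j then F p q v else 0) else 0 := by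
    intro p q
    by_cases h1 : p = i <;> by_cases h2 : q = j <;> simp [OSD_msingle, h1, h2]
  simp only [dPair, h]
  simp

lemma OSD_dPair_mconj {n m : ℕ} (X : Matrix (Fin n) (Fin m) ℂ)
    (F : Matrix (Fin n) (Fin n) (V →ₗ[ℂ] ℂ)) (A : Matrix (Fin m) (Fin m) V) :
    dPair (mconj X F) A = dPair F (mconj X.transpose A) := by
  have lhs : dPair (mconj X F) A
      = ∑ i, ∑ j, ∑ k, ∑ l, (star (X k i) * X l j) * F k l (A i j) := by
    simp [dPair, mconj, LinearMap.sum_apply, LinearMap.smul_apply, smul_eq_mul]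
  have rhs : dPair F (mconj X.transpose A)
      = ∑ k, ∑ l, ∑ i, ∑ j, (star (X k i) * X l j) * F k l (A i j) := by
    simp [dPair, mconj, Matrix.transpose_apply, map_sum, map_smul, smul_eq_mul]
  rw [lhs, rhs, OSD_sum_swap_4]

section HelpStar
variable [StarAddMonoid V] [StarModule ℂ V]

lemma OSD_saParts {W : Type*} [AddCommGroup W] [Module ℂ W] [StarAddMonoid W] [StarModule ℂ W]
    (v : W) : ∃ h k : W, star h = h ∧ star k = k ∧ v = h + Complex.I • k := by
  have hI : Complex.I * (2 * Complex.I)⁻¹ = 2⁻¹ := by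
    field_simp
  refine ⟨(2:ℂ)⁻¹ • (v + star v), (2*Complex.I)⁻¹ • (v - star v), ?_, ?_, ?_⟩
  · rw [star_smul, star_add, star_star]
    rw [show star ((2:ℂ)⁻¹) = (2:ℂ)⁻¹ by simp]
    rw [add_comm]
  · rw [star_smul, star_sub, star_star]
    rw [show star ((2*Complex.I:ℂ)⁻¹) = -(2*Complex.I)⁻¹ by
      simp [Complex.star_def, map_inv₀, Complex.conj_I]]
    rw [neg_smul, ← smul_neg, neg_sub]
  · rw [smul_smul, hI]
    module

lemma OSD_vanish {n : ℕ} (H : Matrix (Fin n) (Fin n) (V →ₗ[ℂ] ℂ))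
    (h : ∀ M : Matrix (Fin n) (Fin n) V, star M = M → dPair H M = 0) :
    ∀ i j, H i j = 0 := by
  have hall : ∀ M, dPair H M = 0 := by
    intro M
    obtain ⟨Hm, Km, h1, h2, h3⟩ := OSD_saParts M
    rw [h3, OSD_dPair_addA, OSD_dPair_smulA, h Hm h1, h Km h2]
    ring
  intro i j
  ext v
  simpa [OSD_dPair_msingle] using hall (OSD_msingle i j v)

end HelpStar
end Helpers

/-- For an operator system structure `{P_n}` on an AOU space, the
entries of any element of the dual cone `P_n^d` are continuous functionals, and the
family `{P_n^d}` is a matrix ordering on `V'` with `P_1^d = (V⁺)^d`. -/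
theorem dualCones_isDualMatrixOrdering
    {V : Type*} [AddCommGroup V] [Module ℂ V] [StarAddMonoid V] [StarModule ℂ V]
    (pos : Set V) (e : V) (hA : IsAOU pos e)
    (P : ∀ n : ℕ, Set (Matrix (Fin n) (Fin n) V)) (hP : IsOpSysStructure pos e P) :
    (∀ (n : ℕ) (F : Matrix (Fin n) (Fin n) (V →ₗ[ℂ] ℂ)), F ∈ dualCones P n →
        ∀ i j, IsBddFunc pos e (F i j)) ∧
    IsDualMatrixOrdering (dualCones P) ∧
    dualCones P 1 = {F | IsPosFunc pos (F 0 0)} := by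

  obtain ⟨⟨⟨hSstar, hSsmul, hSadd, hSprop, hSconj⟩, ⟨⟨hese, hOU⟩, hArch⟩⟩, hone⟩ := hP
  obtain ⟨⟨hsaP, hsmulP, haddP, hpropP⟩, heSA, hOUv, hArchv⟩ := hA
  -- e_n ∈ P n
  have heMat : ∀ n, eMat e n ∈ P n := by
    intro n
    obtain ⟨r, hr, hmem⟩ := hOU n 0 (by simp)
    rw [sub_zero] at hmem
    have h2 := hSsmul n r⁻¹ (by positivity) _ hmem
    rw [smul_smul, show ((r⁻¹:ℝ):ℂ) * (r:ℝ) = 1 by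
      rw [← Complex.ofReal_mul, inv_mul_cancel₀ hr.ne']; simp, one_smul] at h2
    exact h2
  have hreMat : ∀ (n : ℕ) (r : ℝ), 0 ≤ r → (r:ℂ) • eMat e n ∈ P n :=
    fun n r hr => hSsmul n r hr _ (heMat n)
  have hspan : ∀ (n : ℕ) (M : Matrix (Fin n) (Fin n) V), star M = M →
      ∃ A ∈ P n, ∃ B ∈ P n, M = A - B := by
    intro n M hM
    obtain ⟨r, hr, hmem⟩ := hOU n M hM
    exact ⟨_, hreMat n r hr.le, _, hmem, by abel⟩
  have hepos : e ∈ pos := by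
    have h1 := heMat 1
    rw [hone] at h1
    simpa [eMat] using h1
  -- realness
  have hreal : ∀ z : ℂ, 0 ≤ z → star z = z := by
    intro z hz
    rw [Complex.le_def] at hz
    have him : z.im = 0 := hz.2.symm.trans rfl |>.symm ▸ hz.2.symm
    exact Complex.ext rfl (by simp [him])
  have hFreal : ∀ (n : ℕ) (F : Matrix (Fin n) (Fin n) (V →ₗ[ℂ] ℂ)), F ∈ dualCones P n →
      ∀ M, star M = M → star (dPair F M) = dPair F M := by
    intro n F hF M hM
    obtain ⟨A, hAm, B, hBm, rfl⟩ := hspan n M hM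
    rw [OSD_dPair_subA, star_sub, hreal _ (hF A hAm), hreal _ (hF B hBm)]
  -- states are bounded by minNorm pieces
  have hstate_bdd : ∀ v : V,
      BddAbove (Set.range fun s : {s : V →ₗ[ℂ] ℂ // IsState pos e s} =>
        ‖s.1 v‖) := by
    intro v
    obtain ⟨h, k, hh, hk, rfl⟩ := OSD_saParts v
    obtain ⟨r1, hr1, hm1⟩ := hOUv h hh
    obtain ⟨r2, hr2, hm2⟩ := hOUv (-h) (by rw [star_neg, hh])
    obtain ⟨r3, hr3, hm3⟩ := hOUv k hk
    obtain ⟨r4, hr4, hm4⟩ := hOUv (-k) (by rw [star_neg, hk])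
    refine ⟨(r1 + r2) + (r3 + r4), ?_⟩
    rintro x ⟨s, rfl⟩
    obtain ⟨hse, hspos⟩ := s.2
    have key : ∀ (w : V) (a b : ℝ), 0 < a → 0 < b →
        (a:ℂ) • e - w ∈ pos → (b:ℂ) • e - (-w) ∈ pos →
        ‖s.1 w‖ ≤ a + b := by
      intro w a b ha hb hma hmb
      have h1 := hspos _ hma
      have h2 := hspos _ hmb
      rw [map_sub, map_smul, hse, smul_eq_mul, mul_one] at h1
      rw [map_sub, map_smul, hse, smul_eq_mul, mul_one, map_neg, sub_neg_eq_add] at h2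
      rw [Complex.le_def] at h1 h2
      have him : (s.1 w).im = 0 := by
        have := h1.2
        simp [Complex.sub_im] at this
        linarith [this]
      have e1 : (s.1 w).re ≤ a := by
        have := h1.1
        simp [Complex.sub_re] at this
        linarith
      have e2 : -b ≤ (s.1 w).re := by
        have := h2.1
        simp [Complex.add_re] at this
        linarith
      have habs : ‖s.1 w‖ = |(s.1 w).re| := by
        rw [show s.1 w = (((s.1 w).re : ℝ) : ℂ) from Complex.ext rfl (by simp [him])]
        exact (Complex.norm_real _).trans (Real.norm_eq_abs _)
      rw [habs, abs_le]
      constructor <;> linarith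
    have hsv : s.1 (h + Complex.I • k) = s.1 h + Complex.I * s.1 k := by
      rw [map_add, map_smul, smul_eq_mul]
    calc ‖s.1 (h + Complex.I • k)‖
        ≤ ‖s.1 h‖ + ‖Complex.I * s.1 k‖ := by
          rw [hsv]; exact norm_add_le _ _
      _ = ‖s.1 h‖ + ‖s.1 k‖ := by
          rw [norm_mul, Complex.norm_I, one_mul]
      _ ≤ (r1 + r2) + (r3 + r4) :=
          add_le_add (key h r1 r2 hr1 hr2 hm1 hm2) (key k r3 r4 hr3 hr4 hm3 hm4)
  have hstate_le : ∀ (s : V →ₗ[ℂ] ℂ), IsState pos e s → ∀ v,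
      ‖s v‖ ≤ minNorm pos e v :=
    fun s hs v => le_ciSup (hstate_bdd v) ⟨s, hs⟩
  -- positive functionals are bounded
  have hposbound : ∀ g : V →ₗ[ℂ] ℂ, IsPosFunc pos g → ∀ v,
      ‖g v‖ ≤ (g e).re * minNorm pos e v := by
    intro g hg
    have hge := hg e hepos
    rw [Complex.le_def] at hge
    have hget : g e = (((g e).re : ℝ) : ℂ) := Complex.ext rfl (by
      simpa using hge.2.symm)
    rcases eq_or_lt_of_le hge.1 with h0 | hpos
    · have hge0 : g e = 0 := by
        rw [hget, ← h0]; simp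
      have hsa0 : ∀ w, star w = w → g w = 0 := by
        intro w hw
        obtain ⟨a, ha, hma⟩ := hOUv w hw
        obtain ⟨b, hb, hmb⟩ := hOUv (-w) (by rw [star_neg, hw])
        have h1 := hg _ hma
        have h2 := hg _ hmb
        rw [map_sub, map_smul, hge0, smul_eq_mul, mul_zero, zero_sub] at h1
        rw [map_sub, map_smul, hge0, smul_eq_mul, mul_zero, zero_sub, map_neg, neg_neg] at h2
        exact le_antisymm (neg_nonneg.mp h1) h2
      intro v
      obtain ⟨h, k, hh, hk, rfl⟩ := OSD_saParts v
      have hz : g (h + Complex.I • k) = 0 := by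
        rw [map_add, map_smul, hsa0 h hh, hsa0 k hk]; simp
      rw [hz, ← h0]
      simp
    · intro v
      set t := (g e).re with ht
      set s : V →ₗ[ℂ] ℂ := ((t⁻¹ : ℝ) : ℂ) • g with hs_def
      have hst : IsState pos e s := by
        constructor
        · rw [hs_def]
          simp only [LinearMap.smul_apply, smul_eq_mul]
          rw [hget, ← Complex.ofReal_mul, inv_mul_cancel₀ hpos.ne']
          simp
        · intro w hw
          have h0c : (0:ℂ) ≤ ((t⁻¹ : ℝ) : ℂ) := by
            exact_mod_cast inv_nonneg.mpr hge.1
          simpa [hs_def, LinearMap.smul_apply, smul_eq_mul] using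
            mul_nonneg h0c (hg w hw)
      have hgv : g v = (t : ℂ) * s v := by
        rw [hs_def]
        simp only [LinearMap.smul_apply, smul_eq_mul, ← mul_assoc]
        rw [← Complex.ofReal_mul, mul_inv_cancel₀ hpos.ne']
        simp
      rw [hgv, norm_mul, Complex.norm_real, Real.norm_eq_abs, abs_of_pos hpos]
      exact mul_le_mul_of_nonneg_left (hstate_le s hst v) hpos.le
  -- rank one positivity
  have rank1 : ∀ (n : ℕ) (F : Matrix (Fin n) (Fin n) (V →ₗ[ℂ] ℂ)), F ∈ dualCones P n →
      ∀ (x : Fin n → ℂ) (v : V), v ∈ pos →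
      (0:ℂ) ≤ ∑ p, ∑ q, (star (x p) * x q) * F p q v := by
    intro n F hF x v hv
    set X : Matrix (Fin 1) (Fin n) ℂ := Matrix.of fun _ p => x p with hX
    have hA : mconj X (Matrix.of fun _ _ : Fin 1 => v) ∈ P n := by
      refine hSconj 1 n X _ ?_
      rw [hone]
      simpa using hv
    have hdp : dPair F (mconj X (Matrix.of fun _ _ : Fin 1 => v))
        = ∑ p, ∑ q, (star (x p) * x q) * F p q v := by
      simp [dPair, mconj, hX, Fin.sum_univ_one, map_smul, smul_eq_mul]
    rw [← hdp]
    exact hF _ hA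
  -- the three parts
  refine ⟨?_, ⟨?_, ?_, ?_, ?_, ?_⟩, ?_⟩
  · -- boundedness of entries
    intro n F hF i j
    set xf : ℂ → Fin n → ℂ := fun ω p =>
      (if p = i then 1 else 0) + (if p = j then ω else 0) with hxf
    set G : ℂ → (V →ₗ[ℂ] ℂ) := fun ω =>
      ∑ p, ∑ q, (star (xf ω p) * xf ω q) • F p q with hG
    have happly : ∀ ω v, G ω v = ∑ p, ∑ q, (star (xf ω p) * xf ω q) * F p q v := by
      intro ω v
      rw [hG]
      simp [LinearMap.sum_apply, LinearMap.smul_apply, smul_eq_mul]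
    have hGpos : ∀ ω, IsPosFunc pos (G ω) := by
      intro ω v hv
      rw [happly]
      exact rank1 n F hF (xf ω) v hv
    -- polarization
    have hpol : ∀ v, (4:ℂ) * F i j v
        = G 1 v - G (-1) v - Complex.I * (G Complex.I v - G (-Complex.I) v) := by
      intro v
      rw [happly, happly, happly, happly]
      have comb : (∑ p, ∑ q, (star (xf 1 p) * xf 1 q) * F p q v)
          - (∑ p, ∑ q, (star (xf (-1) p) * xf (-1) q) * F p q v)
          - Complex.I * ((∑ p, ∑ q, (star (xf Complex.I p) * xf Complex.I q) * F p q v)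
            - (∑ p, ∑ q, (star (xf (-Complex.I) p) * xf (-Complex.I) q) * F p q v))
          = ∑ p, ∑ q, ((star (xf 1 p) * xf 1 q) - (star (xf (-1) p) * xf (-1) q)
              - Complex.I * ((star (xf Complex.I p) * xf Complex.I q)
                - (star (xf (-Complex.I) p) * xf (-Complex.I) q))) * F p q v := by
        simp only [← Finset.sum_sub_distrib, Finset.mul_sum]
        refine Finset.sum_congr rfl fun p _ => Finset.sum_congr rfl fun q _ => by ring
      rw [comb]
      have coeff : ∀ p q : Fin n,
          ((star (xf 1 p) * xf 1 q) - (star (xf (-1) p) * xf (-1) q)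
            - Complex.I * ((star (xf Complex.I p) * xf Complex.I q)
              - (star (xf (-Complex.I) p) * xf (-Complex.I) q)))
          = (if p = i then (1:ℂ) else 0) * (if q = j then (1:ℂ) else 0) * 4 := by
        intro p q
        have hx : ∀ ω : ℂ, xf ω p
            = (if p = i then (1:ℂ) else 0) + ω * (if p = j then (1:ℂ) else 0) := by
          intro ω
          rw [hxf]
          by_cases h1 : p = i <;> by_cases h2 : p = j <;> simp [h1, h2]
        have hxq : ∀ ω : ℂ, xf ω q
            = (if q = i then (1:ℂ) else 0) + ω * (if q = j then (1:ℂ) else 0) := by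
          intro ω
          rw [hxf]
          by_cases h1 : q = i <;> by_cases h2 : q = j <;> simp [h1, h2]
        have hstarx : ∀ ω : ℂ, star (xf ω p)
            = (if p = i then (1:ℂ) else 0) + star ω * (if p = j then (1:ℂ) else 0) := by
          intro ω
          rw [hx, star_add, star_mul']
          congr 1
          · split_ifs <;> simp
          · congr 1
            split_ifs <;> simp
        set A := (if p = i then (1:ℂ) else 0)
        set B := (if p = j then (1:ℂ) else 0)
        set C := (if q = i then (1:ℂ) else 0)
        set D := (if q = j then (1:ℂ) else 0)
        rw [hstarx 1, hstarx (-1), hstarx Complex.I, hstarx (-Complex.I),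
          hxq 1, hxq (-1), hxq Complex.I, hxq (-Complex.I)]
        simp only [star_one, star_neg, Complex.star_def, Complex.conj_I]
        linear_combination (2*B*C - 2*A*D) * Complex.I_sq
      rw [Finset.sum_congr rfl fun p _ => Finset.sum_congr rfl fun q _ => by rw [coeff p q]]
      have collapse : ∑ p, ∑ q,
          ((if p = i then (1:ℂ) else 0) * (if q = j then (1:ℂ) else 0) * 4) * F p q v
          = 4 * F i j v := by
        have hterm : ∀ p q : Fin n,
            ((if p = i then (1:ℂ) else 0) * (if q = j then (1:ℂ) else 0) * 4) * F p q v
            = if p = i then (if q = j then 4 * F p q v else 0) else 0 := by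
          intro p q
          by_cases h1 : p = i <;> by_cases h2 : q = j <;> simp [h1, h2]
        simp only [hterm]
        simp
      rw [collapse]
    -- assemble the bound
    refine ⟨(4:ℝ)⁻¹ * ((G 1 e).re + (G (-1) e).re + ((G Complex.I e).re
      + (G (-Complex.I) e).re)), ?_⟩
    intro v
    have tri : ‖G 1 v - G (-1) v
        - Complex.I * (G Complex.I v - G (-Complex.I) v)‖
        ≤ (‖G 1 v‖ + ‖G (-1) v‖)
          + (‖G Complex.I v‖ + ‖G (-Complex.I) v‖) := by
      calc ‖G 1 v - G (-1) v - Complex.I * (G Complex.I v - G (-Complex.I) v)‖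
          ≤ ‖G 1 v - G (-1) v‖ + ‖Complex.I * (G Complex.I v - G (-Complex.I) v)‖ :=
            norm_sub_le _ _
        _ = ‖G 1 v - G (-1) v‖ + ‖G Complex.I v - G (-Complex.I) v‖ := by
            rw [norm_mul, Complex.norm_I, one_mul]
        _ ≤ (‖G 1 v‖ + ‖G (-1) v‖) + (‖G Complex.I v‖ + ‖G (-Complex.I) v‖) :=
            add_le_add (norm_sub_le _ _) (norm_sub_le _ _)
    have h4 : ‖F i j v‖
        = (4:ℝ)⁻¹ * ‖(4:ℂ) * F i j v‖ := by
      rw [norm_mul]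
      simp
    rw [h4, hpol]
    have hsum : ‖G 1 v‖ + ‖G (-1) v‖
        + (‖G Complex.I v‖ + ‖G (-Complex.I) v‖)
        ≤ ((G 1 e).re + (G (-1) e).re + ((G Complex.I e).re + (G (-Complex.I) e).re))
          * minNorm pos e v := by
      have b1 := hposbound _ (hGpos 1) v
      have b2 := hposbound _ (hGpos (-1)) v
      have b3 := hposbound _ (hGpos Complex.I) v
      have b4 := hposbound _ (hGpos (-Complex.I)) v
      nlinarith [b1, b2, b3, b4]
    calc (4:ℝ)⁻¹ * ‖G 1 v - G (-1) v
          - Complex.I * (G Complex.I v - G (-Complex.I) v)‖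
        ≤ (4:ℝ)⁻¹ * (((G 1 e).re + (G (-1) e).re + ((G Complex.I e).re
            + (G (-Complex.I) e).re)) * minNorm pos e v) := by
          apply mul_le_mul_of_nonneg_left _ (by norm_num)
          exact le_trans tri hsum
      _ = (4:ℝ)⁻¹ * ((G 1 e).re + (G (-1) e).re + ((G Complex.I e).re
            + (G (-Complex.I) e).re)) * minNorm pos e v := by ring
  · -- hermitian
    intro n F hF i j
    set G : Matrix (Fin n) (Fin n) (V →ₗ[ℂ] ℂ) :=
      Matrix.of fun i j => starFunc (F j i) with hGdef
    have key : ∀ M : Matrix (Fin n) (Fin n) V, star M = M → dPair (F - G) M = 0 := by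
      intro M hM
      have hentry : ∀ p q, star (M p q) = M q p := by
        intro p q
        rw [← Matrix.star_apply, hM]
      have hGM : dPair G M = star (dPair F M) := by
        calc dPair G M = ∑ p, ∑ q, star (F q p (M q p)) := by
              simp [dPair, hGdef, starFunc, hentry]
          _ = star (∑ p, ∑ q, F q p (M q p)) := by simp
          _ = star (dPair F M) := by rw [Finset.sum_comm]; rfl
      rw [OSD_dPair_subF, hGM, hFreal n F hF M hM, sub_self]
    have hzero := OSD_vanish (F - G) key i j
    have : F i j - G i j = 0 := by simpa [Matrix.sub_apply] using hzero
    rw [sub_eq_zero] at this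
    exact this
  · -- scaling
    intro n r hr F hF A hAm
    rw [OSD_dPair_smulF]
    have h0c : (0:ℂ) ≤ ((r:ℝ):ℂ) := by exact_mod_cast hr
    exact mul_nonneg h0c (hF A hAm)
  · -- additivity
    intro n F hF Gq hGq A hAm
    rw [OSD_dPair_addF]
    exact add_nonneg (hF A hAm) (hGq A hAm)
  · -- properness
    intro n F hF hFneg
    have key : ∀ M : Matrix (Fin n) (Fin n) V, star M = M → dPair F M = 0 := by
      intro M hM
      have hzeroOnP : ∀ A ∈ P n, dPair F A = 0 := by
        intro A hAm
        have h1 := hF A hAm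
        have h2 := hFneg A hAm
        rw [OSD_dPair_negF] at h2
        exact le_antisymm (by simpa [neg_nonneg] using h2) h1
      obtain ⟨A, hAm, B, hBm, rfl⟩ := hspan n M hM
      rw [OSD_dPair_subA, hzeroOnP A hAm, hzeroOnP B hBm, sub_self]
    have := OSD_vanish F key
    ext i j v
    simp [this i j]
  · -- compatibility
    intro n m X F hF A hAm
    rw [OSD_dPair_mconj]
    exact hF _ (hSconj m n X.transpose A hAm)
  · -- ground level
    ext F
    simp only [dualCones, Set.mem_setOf_eq, IsPosFunc]
    constructor
    · intro h v hv
      have hmem : (Matrix.of fun _ _ : Fin 1 => v) ∈ P 1 := by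
        rw [hone]; simpa using hv
      have := h _ hmem
      simpa [dPair, Fin.sum_univ_one] using this
    · intro h A hAm
      rw [hone] at hAm
      have : A 0 0 ∈ pos := hAm
      have hd : dPair F A = F 0 0 (A 0 0) := by
        simp [dPair, Fin.sum_univ_one]
      rw [hd]
      exact h _ this
end

section
/- Let (V,V^+,e) be an AOU space, Q_n^min := {∑ P_i ⊗ g_i : P_i ∈ M_n^+, g_i ∈ (V^+)^d} ⊆ M_n(V′), and Q_n^max := {(f_{ij}) ∈ M_n(V′) : (f_{ij}(v)) ∈ M_n^+ for all v ∈ V^+}. Then ^dQ_n^min = C_n^min(V) and (C_n^max(V))^d = Q_n^max. -/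
open scoped ComplexOrder
open Finset

set_option linter.unusedSectionVars false

section AuxAOU
variable {V : Type*} [AddCommGroup V] [Module ℂ V] [StarAddMonoid V] [StarModule ℂ V]
variable {pos : Set V} {e : V}

lemma zero_mem_pos (hA : IsAOU pos e) : (0:V) ∈ pos := by
  obtain ⟨r, hr, hm⟩ := hA.2.2.1 0 (star_zero V)
  simpa using hA.1.2.1 0 le_rfl _ hm

lemma e_mem_pos (hA : IsAOU pos e) : e ∈ pos := by
  obtain ⟨r, hr, hm⟩ := hA.2.2.1 (-e) (by rw [star_neg, hA.2.1])
  have h1 : ((r+1:ℝ):ℂ) • e ∈ pos := by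
    have h : (r:ℂ) • e - -e = ((r+1:ℝ):ℂ) • e := by
      push_cast
      rw [add_smul, one_smul, sub_neg_eq_add]
    rwa [h] at hm
  have h2 := hA.1.2.1 (r+1)⁻¹ (by positivity) _ h1
  rwa [smul_smul, ← Complex.ofReal_mul, inv_mul_cancel₀ (by positivity),
    Complex.ofReal_one, one_smul] at h2

lemma sum_mem_pos (hA : IsAOU pos e) {ι : Type*} (s : Finset ι) (f : ι → V)
    (h : ∀ i ∈ s, f i ∈ pos) : (∑ i ∈ s, f i) ∈ pos :=
  Finset.sum_induction f (· ∈ pos) (fun a b ha hb => hA.1.2.2.1 a ha b hb) (zero_mem_pos hA) h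

set_option linter.unusedSectionVars false

set_option maxHeartbeats 1000000 in
lemma sep_herm (hA : IsAOU pos e) {v : V} (hv : star v = v) (hvn : v ∉ pos) :
    ∃ f : V →ₗ[ℂ] ℂ, IsPosFunc pos f ∧ (f v).re < 0 := by
  classical
  -- non-degeneracy
  have hneg_e : -e ∉ pos := by
    intro h
    have he0 : e = 0 := hA.1.2.2.2 e (e_mem_pos hA) h
    obtain ⟨r, hr, hm⟩ := hA.2.2.1 (-v) (by rw [star_neg, hv])
    apply hvn
    simpa [he0] using hm
  have he0 : e ≠ 0 := fun h => hneg_e (by rw [h, neg_zero]; exact zero_mem_pos hA)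
  have hsmul_e : ∀ a : ℝ, (a:ℂ) • e ∈ pos → 0 ≤ a := by
    intro a ha
    by_contra hlt
    push_neg at hlt
    apply hneg_e
    have h2 := hA.1.2.1 (-a)⁻¹ (inv_nonneg.mpr (by linarith)) _ ha
    rw [smul_smul, ← Complex.ofReal_mul] at h2
    have hval : ((-a)⁻¹ * a : ℝ) = -1 := by
      rw [inv_neg, neg_mul, inv_mul_cancel₀ hlt.ne]
    rw [hval] at h2
    simpa using h2
  -- the set S and its infimum
  set S : Set ℝ := {a : ℝ | (a:ℂ) • e + v ∈ pos} with hS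
  have hSne : S.Nonempty := by
    obtain ⟨r, hr, hm⟩ := hA.2.2.1 (-v) (by rw [star_neg, hv])
    exact ⟨r, by show (r:ℂ) • e + v ∈ pos; simpa [sub_neg_eq_add] using hm⟩
  have hSbdd : BddBelow S := by
    obtain ⟨s₀, hs₀, hm⟩ := hA.2.2.1 v hv
    refine ⟨-s₀, fun a ha => ?_⟩
    have h1 : ((a + s₀ : ℝ):ℂ) • e ∈ pos := by
      have := hA.1.2.2.1 _ ha _ hm
      have h : ((a:ℂ) • e + v) + ((s₀:ℂ) • e - v) = ((a + s₀ : ℝ):ℂ) • e := by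
        push_cast; module
      rwa [h] at this
    linarith [hsmul_e _ h1]
  set t : ℝ := sInf S with ht
  have htS : ∀ ε : ℝ, 0 < ε → ((t + ε : ℝ):ℂ) • e + v ∈ pos := by
    intro ε hε
    obtain ⟨a, haS, halt⟩ := exists_lt_of_csInf_lt hSne (by linarith : sInf S < t + ε)
    have h : ((t + ε : ℝ):ℂ) • e + v = ((t + ε - a : ℝ):ℂ) • e + ((a:ℂ) • e + v) := by
      push_cast; module
    rw [h]
    exact hA.1.2.2.1 _ (hA.1.2.1 _ (by linarith) _ (e_mem_pos hA)) _ haS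
  have htpos : 0 < t := by
    by_contra hle
    push_neg at hle
    apply hvn
    apply hA.2.2.2
    intro r hr
    have := htS (r - t) (by linarith)
    simpa using this
  -- key inequality
  have keyIneq : ∀ α β : ℝ, (α:ℂ) • e + (β:ℂ) • v ∈ pos → t * β ≤ α := by
    intro α β hm
    rcases lt_trichotomy β 0 with hβ | hβ | hβ
    · -- β < 0
      set c : ℝ := (-β)⁻¹ * α with hc_def
      have h2 := hA.1.2.1 (-β)⁻¹ (inv_nonneg.mpr (by linarith)) _ hm
      rw [smul_add, smul_smul, smul_smul, ← Complex.ofReal_mul, ← Complex.ofReal_mul] at h2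
      have hb : ((-β)⁻¹ * β : ℝ) = -1 := by
        rw [inv_neg, neg_mul, inv_mul_cancel₀ hβ.ne]
      rw [hb, ← hc_def] at h2
      have h3 : ∀ ε : ℝ, 0 < ε → 0 ≤ c + (t + ε) := by
        intro ε hε
        apply hsmul_e
        have h := hA.1.2.2.1 _ h2 _ (htS ε hε)
        have hq : ((c:ℝ):ℂ) • e + ((-1:ℝ):ℂ) • v + (((t + ε : ℝ):ℂ) • e + v)
            = ((c + (t + ε) : ℝ):ℂ) • e := by
          push_cast; module
        rwa [hq] at h
      have h4 : 0 ≤ c + t := by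
        by_contra hcon
        push_neg at hcon
        have := h3 (-(c + t) / 2) (by linarith)
        linarith
      have h5 : -t ≤ c := by linarith
      have h6 : -t * (-β) ≤ c * (-β) :=
        mul_le_mul_of_nonneg_right h5 (by linarith)
      rw [hc_def, inv_mul_eq_div, div_mul_eq_mul_div, mul_div_assoc,
        div_self (by linarith : -β ≠ 0), mul_one] at h6
      nlinarith
    · subst hβ
      simpa using hsmul_e α (by simpa using hm)
    · -- β > 0
      have h2 := hA.1.2.1 β⁻¹ (inv_nonneg.mpr hβ.le) _ hm
      rw [smul_add, smul_smul, smul_smul, ← Complex.ofReal_mul, ← Complex.ofReal_mul,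
        inv_mul_cancel₀ hβ.ne', Complex.ofReal_one, one_smul] at h2
      have h3 : t ≤ β⁻¹ * α := csInf_le hSbdd h2
      have h4 : t * β ≤ (β⁻¹ * α) * β := mul_le_mul_of_nonneg_right h3 (by linarith)
      rw [inv_mul_eq_div, div_mul_eq_mul_div, mul_div_assoc,
        div_self hβ.ne', mul_one] at h4
      exact h4
  -- set up the real module structure
  letI : Module ℝ V := Module.compHom V (algebraMap ℝ ℂ)
  have rsmul : ∀ (a : ℝ) (x : V), a • x = (a:ℂ) • x := fun a x => rfl
  letI : IsScalarTower ℝ ℂ V := ⟨fun r c x => by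
    rw [Algebra.smul_def, rsmul, mul_smul]
    norm_num⟩
  have star_coe : ∀ (r : ℝ) (x : V), star (((r:ℝ):ℂ) • x) = ((r:ℝ):ℂ) • star x := by
    intro r x
    rw [star_smul, Complex.star_def, Complex.conj_ofReal]
  set u : V := v + ((t/2 : ℝ):ℂ) • e with hu_def
  have hstar_u : star u = u := by
    rw [hu_def, star_add, hv, star_coe, hA.2.1]
  -- the convex cone s'
  set s' : ConvexCone ℝ V :=
    { carrier := {x | ∃ c : ℝ, 0 ≤ c ∧ x + star x + (c:ℂ) • u ∈ pos}
      smul_mem' := by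
        rintro r hr x ⟨c, hc, hx⟩
        refine ⟨r * c, by positivity, ?_⟩
        have h : r • x + star (r • x) + ((r * c : ℝ):ℂ) • u
            = (r:ℂ) • (x + star x + (c:ℂ) • u) := by
          rw [rsmul, star_coe]
          push_cast; module
        rw [h]
        exact hA.1.2.1 r hr.le _ hx
      add_mem' := by
        rintro x ⟨c, hc, hx⟩ y ⟨d, hd, hy⟩
        refine ⟨c + d, by positivity, ?_⟩
        have h : x + y + star (x + y) + ((c + d : ℝ):ℂ) • u
            = (x + star x + (c:ℂ) • u) + (y + star y + (d:ℂ) • u) := by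
          rw [star_add]; push_cast; module
        rw [h]
        exact hA.1.2.2.1 _ hx _ hy } with hs'_def
  have hmem_s' : ∀ x : V, (∃ c : ℝ, 0 ≤ c ∧ x + star x + (c:ℂ) • u ∈ pos) → x ∈ s' :=
    fun x h => h
  -- the partial linear map on span {e}
  have hH : ∀ c : ℝ, c • e = 0 → c • (1:ℝ) = 0 := by
    intro c hc
    rw [rsmul] at hc
    rcases smul_eq_zero.mp hc with h | h
    · rw [show c = 0 from by exact_mod_cast h]; simp
    · exact absurd h he0
  have hnonneg : ∀ x : (LinearPMap.mkSpanSingleton' e (1:ℝ) (σ := RingHom.id ℝ) hH).domain,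
      (x : V) ∈ s' → 0 ≤ (LinearPMap.mkSpanSingleton' e (1:ℝ) (σ := RingHom.id ℝ) hH) x := by
    rintro ⟨x, hx⟩ hxs
    obtain ⟨a, rfl⟩ := Submodule.mem_span_singleton.mp hx
    obtain ⟨c, hc, hmem⟩ := hxs
    rw [LinearPMap.mkSpanSingleton'_apply e (1:ℝ) (σ := RingHom.id ℝ) hH a hx, smul_eq_mul, mul_one, RingHom.id_apply]
    -- a • e + star (a • e) + c • u ∈ pos
    have hse : star (a • e) = a • e := by
      rw [rsmul, star_coe, hA.2.1]
    rw [hse] at hmem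
    have hmem2 : ((2 * a + c * (t/2) : ℝ):ℂ) • e + ((c:ℝ):ℂ) • v ∈ pos := by
      have h : a • e + a • e + (c:ℂ) • u
          = ((2 * a + c * (t/2) : ℝ):ℂ) • e + ((c:ℝ):ℂ) • v := by
        rw [rsmul, hu_def]; push_cast; module
      rwa [h] at hmem
    have := keyIneq _ _ hmem2
    nlinarith
  have hdense : ∀ y : V, ∃ x : (LinearPMap.mkSpanSingleton' e (1:ℝ) (σ := RingHom.id ℝ) hH).domain,
      (x : V) + y ∈ s' := by
    intro y
    obtain ⟨r, hr, hm⟩ := hA.2.2.1 (-(y + star y)) (by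
      rw [star_neg, star_add, star_star]; rw [add_comm])
    refine ⟨⟨(r/2) • e, Submodule.mem_span_singleton.mpr ⟨r/2, rfl⟩⟩, ?_⟩
    refine hmem_s' _ ⟨0, le_rfl, ?_⟩
    have h : (r/2) • e + y + star ((r/2) • e + y) + ((0:ℝ):ℂ) • u
        = ((r:ℂ) • e - -(y + star y)) := by
      rw [star_add, rsmul, star_coe, hA.2.1]
      push_cast; module
    rw [h]
    exact hm
  obtain ⟨g, hgf, hgs⟩ :=
    riesz_extension (s'.toPointedCone ⟨0, le_rfl, by simpa using zero_mem_pos hA⟩) (LinearPMap.mkSpanSingleton' e (1:ℝ) (σ := RingHom.id ℝ) hH) hnonneg hdense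
  have hge : g e = 1 := by
    have he_mem : e ∈ (LinearPMap.mkSpanSingleton' e (1:ℝ) (σ := RingHom.id ℝ) hH).domain := by
      rw [LinearPMap.domain_mkSpanSingleton]
      exact Submodule.mem_span_singleton.mpr ⟨1, one_smul ℝ e⟩
    have h1 := hgf ⟨e, he_mem⟩
    rwa [LinearPMap.mkSpanSingleton'_apply_self e (1:ℝ) (σ := RingHom.id ℝ) hH he_mem] at h1
  have hgpos : ∀ p ∈ pos, 0 ≤ g p := by
    intro p hp
    refine hgs p (hmem_s' p ⟨0, le_rfl, ?_⟩)
    have h : p + star p + ((0:ℝ):ℂ) • u = ((2:ℝ):ℂ) • p := by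
      rw [hA.1.1 p hp]; push_cast; module
    rw [h]
    exact hA.1.2.1 2 (by norm_num) _ hp
  have hskew : ∀ x : V, x + star x = 0 → g x = 0 := by
    intro x hx
    have h1 : 0 ≤ g x := by
      refine hgs x (hmem_s' x ⟨0, le_rfl, ?_⟩)
      rw [hx]; simpa using zero_mem_pos hA
    have h2 : 0 ≤ g (-x) := by
      refine hgs (-x) (hmem_s' (-x) ⟨0, le_rfl, ?_⟩)
      have h : -x + star (-x) + ((0:ℝ):ℂ) • u = -(x + star x) := by
        rw [star_neg]; push_cast; module
      rw [h, hx]; simpa using zero_mem_pos hA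
    rw [map_neg] at h2
    linarith
  have hgu : g u ≤ 0 := by
    have h2 : 0 ≤ g (-u) := by
      refine hgs (-u) (hmem_s' (-u) ⟨2, by norm_num, ?_⟩)
      have h : -u + star (-u) + ((2:ℝ):ℂ) • u = 0 := by
        rw [star_neg, hstar_u]; push_cast; module
      rw [h]; exact zero_mem_pos hA
    rw [map_neg] at h2
    linarith
  have hgv : g v ≤ -(t/2) := by
    have h : g u = g v + (t/2) * g e := by
      rw [hu_def, map_add, ← rsmul, map_smul, smul_eq_mul]
    rw [h, hge, mul_one] at hgu
    linarith
  -- extend to a ℂ-linear functional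
  refine ⟨Module.Dual.extendRCLike g, ?_, ?_⟩
  · intro p hp
    have hIp : g (Complex.I • p) = 0 := by
      apply hskew
      rw [star_smul, hA.1.1 p hp, Complex.star_def, Complex.conj_I]
      module
    rw [LinearMap.extendTo𝕜'_apply]
    have : (RCLike.I : ℂ) = Complex.I := rfl
    rw [this, hIp]
    simp only [RCLike.ofReal_zero, mul_zero, sub_zero]
    exact RCLike.ofReal_nonneg.mpr (hgpos p hp)
  · have hIv : g (Complex.I • v) = 0 := by
      apply hskew
      rw [star_smul, hv, Complex.star_def, Complex.conj_I]
      module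
    rw [LinearMap.extendTo𝕜'_apply]
    have : (RCLike.I : ℂ) = Complex.I := rfl
    rw [this, hIv]
    simp only [RCLike.ofReal_zero, mul_zero, sub_zero]
    have hre : ∀ r : ℝ, (@RCLike.ofReal ℂ _ r).re = r := fun r => rfl
    rw [hre]
    linarith

lemma im_zero_of_nonneg {z : ℂ} (hz : 0 ≤ z) : z.im = 0 := ((Complex.le_def.mp hz).2).symm

lemma re_nonneg_of_nonneg {z : ℂ} (hz : 0 ≤ z) : 0 ≤ z.re := by
  simpa using (Complex.le_def.mp hz).1

lemma posFunc_im_zero (hA : IsAOU pos e) {f : V →ₗ[ℂ] ℂ} (hf : IsPosFunc pos f)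
    {x : V} (hx : star x = x) : (f x).im = 0 := by
  obtain ⟨r, hr, hm⟩ := hA.2.2.1 x hx
  have h1 := im_zero_of_nonneg (hf _ hm)
  have h2 := im_zero_of_nonneg (hf _ (e_mem_pos hA))
  have h3 : f ((r:ℂ) • e - x) = (r:ℂ) * f e - f x := by
    rw [map_sub, map_smul, smul_eq_mul]
  rw [h3] at h1
  simp only [Complex.sub_im, Complex.mul_im, Complex.ofReal_re, Complex.ofReal_im] at h1
  simp only [h2] at h1
  linarith

lemma mem_pos_of_forall_posFunc (hA : IsAOU pos e) {v : V}
    (h : ∀ f : V →ₗ[ℂ] ℂ, IsPosFunc pos f → 0 ≤ f v) : v ∈ pos := by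
  set h₁ : V := ((2:ℂ)⁻¹) • (v + star v) with hh1_def
  set k : V := ((2:ℂ)⁻¹ * Complex.I) • (star v - v) with hk_def
  have hdecomp : v = h₁ + Complex.I • k := by
    rw [hh1_def, hk_def, smul_smul]
    have hI : Complex.I * ((2:ℂ)⁻¹ * Complex.I) = -(2:ℂ)⁻¹ := by
      rw [mul_comm, mul_assoc, Complex.I_mul_I]; ring
    rw [hI]
    module
  have hh1herm : star h₁ = h₁ := by
    rw [hh1_def, star_smul, star_add, star_star]
    have hc : star ((2:ℂ)⁻¹) = (2:ℂ)⁻¹ := by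
      simp [Complex.star_def, ← Complex.ofReal_ofNat]
    rw [hc]; module
  have hkherm : star k = k := by
    rw [hk_def, star_smul, star_sub, star_star]
    have hc : star ((2:ℂ)⁻¹ * Complex.I) = -((2:ℂ)⁻¹ * Complex.I) := by
      simp [Complex.star_def, map_mul, Complex.conj_I, ← Complex.ofReal_ofNat]
    rw [hc]; module
  have hk0 : ∀ f : V →ₗ[ℂ] ℂ, IsPosFunc pos f → f k = 0 := by
    intro f hf
    have him_v := im_zero_of_nonneg (h f hf)
    have h1im := posFunc_im_zero hA hf hh1herm
    have hkim := posFunc_im_zero hA hf hkherm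
    have heq : f v = f h₁ + Complex.I * f k := by
      rw [hdecomp, map_add, map_smul, smul_eq_mul, map_smul, smul_eq_mul]
    have hre0 : (f k).re = 0 := by
      have := congrArg Complex.im heq
      simp only [Complex.add_im, Complex.mul_im, Complex.I_re, Complex.I_im] at this
      rw [him_v, h1im] at this
      simpa [hkim] using this.symm
    exact Complex.ext (by simp [hre0]) (by simp [hkim])
  have hk : k = 0 := by
    have hkpos : k ∈ pos := by
      by_contra hn
      obtain ⟨f, hf, hlt⟩ := sep_herm hA hkherm hn
      rw [hk0 f hf] at hlt
      simp at hlt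
    have hknegpos : -k ∈ pos := by
      by_contra hn
      obtain ⟨f, hf, hlt⟩ := sep_herm hA (by rw [star_neg, hkherm]) hn
      rw [map_neg, hk0 f hf] at hlt
      simp at hlt
    exact hA.1.2.2.2 k hkpos hknegpos
  have hvherm : star v = v := by
    have hvh : v = h₁ := by rw [hdecomp, hk]; simp
    rw [hvh]; exact hh1herm
  by_contra hn
  obtain ⟨f, hf, hlt⟩ := sep_herm hA hvherm hn
  have := re_nonneg_of_nonneg (h f hf)
  linarith


end AuxAOU

-- rank one matrices are PSD
lemma rankOne_psd {n : ℕ} (lam : Fin n → ℂ) :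
    (Matrix.of fun p q => star (lam p) * lam q : Matrix (Fin n) (Fin n) ℂ).PosSemidef := by
  rw [Matrix.posSemidef_iff_dotProduct_mulVec]
  constructor
  · ext p q
    simp [Matrix.conjTranspose_apply, mul_comm]
  · intro x
    have h : dotProduct (star x)
        ((Matrix.of fun p q => star (lam p) * lam q).mulVec x)
        = star (∑ q, lam q * x q) * (∑ q, lam q * x q) := by
      simp only [dotProduct, Matrix.mulVec, Pi.star_apply, Matrix.of_apply,
        star_sum, star_mul', Finset.sum_mul, Finset.mul_sum]
      rw [Finset.sum_comm]
      refine Finset.sum_congr rfl fun p _ => Finset.sum_congr rfl fun q _ => ?_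
      ring
    rw [h]
    exact star_mul_self_nonneg _

lemma psd_pair {n : ℕ} {a M : Matrix (Fin n) (Fin n) ℂ} (ha : a.PosSemidef)
    (hM : M.PosSemidef) : 0 ≤ ∑ p, ∑ q, a p q * M p q := by
  obtain ⟨B, rfl⟩ : ∃ B : Matrix (Fin n) (Fin n) ℂ, a = B.conjTranspose * B := by
    open scoped MatrixOrder Matrix.Norms.L2Operator in
    obtain ⟨B, hB⟩ := CStarAlgebra.nonneg_iff_eq_star_mul_self.mp (Matrix.nonneg_iff_posSemidef.mpr ha)
    exact ⟨B, hB⟩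
  have h : ∑ p, ∑ q, (B.conjTranspose * B) p q * M p q
      = ∑ m, dotProduct (star (B m)) (M.mulVec (B m)) := by
    simp only [Matrix.mul_apply, Matrix.conjTranspose_apply, dotProduct,
      Matrix.mulVec, Pi.star_apply, Finset.sum_mul, Finset.mul_sum]
    refine Eq.trans (Finset.sum_congr rfl fun p _ => Finset.sum_comm) ?_
    refine Eq.trans Finset.sum_comm ?_
    refine Finset.sum_congr rfl fun m _ => Finset.sum_congr rfl fun p _ =>
      Finset.sum_congr rfl fun q _ => ?_
    ring
  rw [h]
  exact Finset.sum_nonneg fun m _ => hM.dotProduct_mulVec_nonneg (B m)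

lemma isHermitian_of_quad {n : ℕ} {M : Matrix (Fin n) (Fin n) ℂ}
    (h : ∀ x : Fin n → ℂ, 0 ≤ dotProduct (star x) (M.mulVec x)) :
    M.IsHermitian := by
  classical
  have hreal : ∀ x : Fin n → ℂ, (dotProduct (star x) (M.mulVec x)).im = 0 :=
    fun x => im_zero_of_nonneg (h x)
  have hquad : ∀ (c d : ℂ) (p q : Fin n), p ≠ q →
      (star c * c * M p p + star c * d * M p q + star d * c * M q p
        + star d * d * M q q).im = 0 := by
    intro c d p q hpq
    set E : Fin n → Fin n → ℂ := fun r j => if j = r then 1 else 0 with hE_def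
    have hx := hreal (fun j => c * E p j + d * E q j)
    have hexp : dotProduct
        (star (fun j => c * E p j + d * E q j))
        (M.mulVec (fun j => c * E p j + d * E q j))
      = star c * c * M p p + star c * d * M p q + star d * c * M q p
        + star d * d * M q q := by
      simp only [dotProduct, Matrix.mulVec, Pi.star_apply, star_add, star_mul']
      have hinner : ∀ i : Fin n, ∑ j, M i j * (c * E p j + d * E q j)
          = M i p * c + M i q * d := fun i => by
        simp [hE_def, mul_add, Finset.sum_add_distrib, mul_ite,
          Finset.sum_ite_eq', mul_comm]
      simp only [hinner]
      simp only [hE_def, apply_ite (star : ℂ → ℂ), star_one, star_zero, add_mul, mul_add,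
        ite_mul, mul_ite, mul_one, mul_zero, one_mul, zero_mul, zero_add, add_zero,
        Finset.sum_add_distrib, Finset.sum_ite_eq', Finset.mem_univ, if_true]
      ring
    rw [hexp] at hx
    exact hx
  have hdiag : ∀ r : Fin n, (M r r).im = 0 := by
    intro r
    have hx := hreal (fun j => if j = r then 1 else 0)
    have hexp : dotProduct (star (fun j => if j = r then (1:ℂ) else 0))
        (M.mulVec (fun j => if j = r then (1:ℂ) else 0)) = M r r := by
      simp [dotProduct, Matrix.mulVec, apply_ite (star : ℂ → ℂ), ite_mul, mul_ite,
        Finset.sum_ite_eq', Finset.mem_univ]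
    rwa [hexp] at hx
  ext p q
  rw [Matrix.conjTranspose_apply]
  by_cases hpq : p = q
  · subst hpq
    rw [Complex.star_def, Complex.conj_eq_iff_im]
    exact hdiag p
  · have h1 := hquad 1 1 p q hpq
    have h2 := hquad 1 Complex.I p q hpq
    simp only [star_one, one_mul, mul_one, Complex.star_def, Complex.conj_I, neg_mul,
      Complex.I_mul_I, Complex.add_im, Complex.neg_im, Complex.mul_im, Complex.I_re,
      Complex.I_im, Complex.mul_re, zero_mul, one_mul, neg_neg, neg_zero, zero_add,
      add_zero, sub_zero, zero_sub] at h1 h2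
    have e1 := hdiag p
    have e2 := hdiag q
    refine Complex.ext ?_ ?_
    · show (star (M q p)).re = (M p q).re
      rw [Complex.star_def, Complex.conj_re]
      linarith
    · show (star (M q p)).im = (M p q).im
      rw [Complex.star_def, Complex.conj_im]
      linarith


section AuxMain
variable {V : Type*} [AddCommGroup V] [Module ℂ V] [StarAddMonoid V] [StarModule ℂ V]
variable {pos : Set V} {e : V}

lemma dPair_eTensor_func {n : ℕ} (a : Matrix (Fin n) (Fin n) ℂ) (g : V →ₗ[ℂ] ℂ)
    (A : Matrix (Fin n) (Fin n) V) :
    dPair (eTensor a g) A = g (∑ p, ∑ q, a p q • A p q) := by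
  simp [dPair, eTensor, map_sum, map_smul, smul_eq_mul]

lemma dPair_eTensor_vec {n : ℕ} (F : Matrix (Fin n) (Fin n) (V →ₗ[ℂ] ℂ))
    (a : Matrix (Fin n) (Fin n) ℂ) (v : V) :
    dPair F (eTensor a v) = ∑ p, ∑ q, a p q * F p q v := by
  simp [dPair, eTensor, map_smul, smul_eq_mul]

lemma dPair_sum {n k : ℕ} (F : Matrix (Fin n) (Fin n) (V →ₗ[ℂ] ℂ))
    (B : Fin k → Matrix (Fin n) (Fin n) V) :
    dPair F (∑ i, B i) = ∑ i, dPair F (B i) := by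
  simp only [dPair, Matrix.sum_apply, map_sum]
  exact Eq.trans (Finset.sum_congr rfl fun p _ => Finset.sum_comm) Finset.sum_comm

lemma dPair_add {n : ℕ} (F : Matrix (Fin n) (Fin n) (V →ₗ[ℂ] ℂ))
    (A B : Matrix (Fin n) (Fin n) V) :
    dPair F (A + B) = dPair F A + dPair F B := by
  simp [dPair, Matrix.add_apply, map_add, Finset.sum_add_distrib]

lemma dPair_smul {n : ℕ} (F : Matrix (Fin n) (Fin n) (V →ₗ[ℂ] ℂ))
    (c : ℂ) (A : Matrix (Fin n) (Fin n) V) :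
    dPair F (c • A) = c * dPair F A := by
  simp [dPair, Matrix.smul_apply, map_smul, smul_eq_mul, Finset.mul_sum]

lemma cmin_combo (hA : IsAOU pos e) {n : ℕ} {A : Matrix (Fin n) (Fin n) V}
    (hAC : A ∈ Cmin pos n) {a : Matrix (Fin n) (Fin n) ℂ} (ha : a.PosSemidef) :
    (∑ p, ∑ q, a p q • A p q) ∈ pos := by
  obtain ⟨B, rfl⟩ : ∃ B : Matrix (Fin n) (Fin n) ℂ, a = B.conjTranspose * B := by
    open scoped MatrixOrder Matrix.Norms.L2Operator in
    obtain ⟨B, hB⟩ := CStarAlgebra.nonneg_iff_eq_star_mul_self.mp (Matrix.nonneg_iff_posSemidef.mpr ha)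
    exact ⟨B, hB⟩
  have h : ∑ p, ∑ q, (B.conjTranspose * B) p q • A p q
      = ∑ m, ∑ p, ∑ q, (star (B m p) * B m q) • A p q := by
    simp only [Matrix.mul_apply, Matrix.conjTranspose_apply, Finset.sum_smul]
    refine Eq.trans (Finset.sum_congr rfl fun p _ => Finset.sum_comm) ?_
    exact Finset.sum_comm
  rw [h]
  exact sum_mem_pos hA _ _ fun m _ => hAC (fun p => B m p)

lemma smul_one_psd {n : ℕ} {r : ℝ} (hr : 0 ≤ r) :
    ((r:ℂ) • (1 : Matrix (Fin n) (Fin n) ℂ)).PosSemidef := by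
  rw [Matrix.posSemidef_iff_dotProduct_mulVec]
  constructor
  · ext p q
    simp only [Matrix.conjTranspose_apply, Matrix.smul_apply, Matrix.one_apply, star_smul,
      apply_ite (star : ℂ → ℂ), star_one, star_zero, Complex.star_def, Complex.conj_ofReal]
    rw [eq_comm]
    by_cases h : p = q <;> simp [h, eq_comm]
  · intro x
    have h : dotProduct (star x) (((r:ℂ) • (1 : Matrix (Fin n) (Fin n) ℂ)).mulVec x)
        = (r:ℂ) * ∑ i, star (x i) * x i := by
      rw [Matrix.smul_mulVec, Matrix.one_mulVec]
      simp [dotProduct, Finset.mul_sum, mul_smul_comm, smul_eq_mul]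
      exact Finset.sum_congr rfl fun i _ => by ring
    rw [h]
    exact mul_nonneg (Complex.zero_le_real.mpr hr)
      (Finset.sum_nonneg fun i _ => star_mul_self_nonneg (x i))

lemma smul_eMat_eq {n : ℕ} (r : ℝ) (e : V) :
    (r:ℂ) • eMat e n = eTensor ((r:ℂ) • (1 : Matrix (Fin n) (Fin n) ℂ)) e := by
  ext p q
  simp only [Matrix.smul_apply, eMat, eTensor, Matrix.of_apply, Matrix.smul_apply,
    Matrix.one_apply, smul_eq_mul, mul_ite, mul_one, mul_zero, ite_smul, zero_smul, smul_ite,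
    smul_zero]

lemma dmax_subset_cmax (hA : IsAOU pos e) {n : ℕ} : Dmax pos n ⊆ Cmax pos e n := by
  rintro A ⟨k, a, w, ha, hw, rfl⟩ r hr
  refine ⟨k + 1, Fin.cons ((r:ℂ) • (1 : Matrix (Fin n) (Fin n) ℂ)) a, Fin.cons e w, ?_, ?_, ?_⟩
  · intro i
    refine Fin.cases ?_ ?_ i
    · simpa using smul_one_psd hr.le
    · intro j; simpa using ha j
  · intro i
    refine Fin.cases ?_ ?_ i
    · simpa using e_mem_pos hA
    · intro j; simpa using hw j
  · rw [Fin.sum_univ_succ]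
    simp only [Fin.cons_zero, Fin.cons_succ]
    rw [smul_eMat_eq]

lemma dPair_sum_left {n k : ℕ} (G : Fin k → Matrix (Fin n) (Fin n) (V →ₗ[ℂ] ℂ))
    (A : Matrix (Fin n) (Fin n) V) :
    dPair (∑ i, G i) A = ∑ i, dPair (G i) A := by
  simp only [dPair, Matrix.sum_apply, LinearMap.coe_sum, Finset.sum_apply]
  exact Eq.trans (Finset.sum_congr rfl fun p _ => Finset.sum_comm) Finset.sum_comm


end AuxMain

/-- `^d(Q_n^min) = C_n^min(V)` and `(C_n^max(V))^d = Q_n^max`. -/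
theorem preCones_Qmin_and_dual_Cmax
    {V : Type*} [AddCommGroup V] [Module ℂ V] [StarAddMonoid V] [StarModule ℂ V]
    (pos : Set V) (e : V) (hA : IsAOU pos e) (n : ℕ) :
    preCones (fun m => {F : Matrix (Fin m) (Fin m) (V →ₗ[ℂ] ℂ) |
        ∃ (k : ℕ) (P : Fin k → Matrix (Fin m) (Fin m) ℂ) (g : Fin k → (V →ₗ[ℂ] ℂ)),
          (∀ i, (P i).PosSemidef) ∧ (∀ i, IsPosFunc pos (g i)) ∧
          F = ∑ i, eTensor (P i) (g i)}) n = Cmin pos n ∧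
    dualCones (Cmax pos e) n =
      {F | ∀ v ∈ pos, (Matrix.of fun i j => F i j v).PosSemidef} := by
  constructor
  · ext A
    constructor
    · intro hpre lam
      apply mem_pos_of_forall_posFunc hA
      intro f hf
      have hFm : (eTensor (Matrix.of fun p q => star (lam p) * lam q) f) ∈
          {F : Matrix (Fin n) (Fin n) (V →ₗ[ℂ] ℂ) |
            ∃ (k : ℕ) (P : Fin k → Matrix (Fin n) (Fin n) ℂ) (g : Fin k → (V →ₗ[ℂ] ℂ)),
              (∀ i, (P i).PosSemidef) ∧ (∀ i, IsPosFunc pos (g i)) ∧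
              F = ∑ i, eTensor (P i) (g i)} :=
        ⟨1, fun _ => Matrix.of fun p q => star (lam p) * lam q, fun _ => f,
          fun _ => rankOne_psd lam, fun _ => hf, by rw [Fin.sum_univ_one]⟩
      have h0 := hpre _ hFm
      rw [dPair_eTensor_func] at h0
      simpa [Matrix.of_apply] using h0
    · intro hC F hF
      obtain ⟨k, P, g, hP, hg, rfl⟩ := hF
      rw [dPair_sum_left]
      refine Finset.sum_nonneg fun i _ => ?_
      rw [dPair_eTensor_func]
      exact hg i _ (cmin_combo hA hC (hP i))
  · ext F
    constructor
    · intro hdual v hv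
      have hquad : ∀ x : Fin n → ℂ,
          0 ≤ dotProduct (star x) ((Matrix.of fun i j => F i j v).mulVec x) := by
        intro x
        have hmem : eTensor (Matrix.of fun p q => star (x p) * x q) v ∈ Cmax pos e n :=
          dmax_subset_cmax hA ⟨1, fun _ => Matrix.of fun p q => star (x p) * x q,
            fun _ => v, fun _ => rankOne_psd x, fun _ => hv, by rw [Fin.sum_univ_one]⟩
        have h0 := hdual _ hmem
        rw [dPair_eTensor_vec] at h0
        have heq : dotProduct (star x) ((Matrix.of fun i j => F i j v).mulVec x)
            = ∑ p, ∑ q, (Matrix.of fun p q => star (x p) * x q) p q * F p q v := by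
          simp only [dotProduct, Matrix.mulVec, Pi.star_apply, Matrix.of_apply,
            Finset.mul_sum]
          refine Finset.sum_congr rfl fun p _ => Finset.sum_congr rfl fun q _ => by ring
        rw [heq]
        exact h0
      exact Matrix.posSemidef_iff_dotProduct_mulVec.mpr ⟨isHermitian_of_quad hquad, hquad⟩
    · intro hF A hAC
      have hD : ∀ B ∈ Dmax pos n, 0 ≤ dPair F B := by
        rintro B ⟨k, a, w, ha, hw, rfl⟩
        rw [dPair_sum]
        refine Finset.sum_nonneg fun i _ => ?_
        rw [dPair_eTensor_vec]
        exact psd_pair (ha i) (hF (w i) (hw i))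
      set c := dPair F (eMat e n) with hc
      have hc0 : 0 ≤ c := by
        refine hD _ ⟨1, fun _ => (1 : Matrix (Fin n) (Fin n) ℂ), fun _ => e,
          fun _ => Matrix.PosSemidef.one, fun _ => e_mem_pos hA, ?_⟩
        rw [Fin.sum_univ_one]
        ext p q
        simp [eMat, eTensor, Matrix.one_apply, ite_smul]
      set d := dPair F A with hd
      have key : ∀ r : ℝ, 0 < r → 0 ≤ (r:ℂ) * c + d := by
        intro r hr
        have h1 := hD _ (hAC r hr)
        rwa [dPair_add, dPair_smul] at h1
      have hcim : c.im = 0 := im_zero_of_nonneg hc0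
      have hcre : 0 ≤ c.re := re_nonneg_of_nonneg hc0
      have hdim : d.im = 0 := by
        have h1 := im_zero_of_nonneg (key 1 one_pos)
        simpa [Complex.add_im, Complex.mul_im, hcim] using h1
      have hdre : 0 ≤ d.re := by
        by_contra hcon
        push_neg at hcon
        set r : ℝ := -d.re / (2 * (c.re + 1)) with hr_def
        have hrpos : 0 < r := div_pos (by linarith) (by linarith)
        have hkey := re_nonneg_of_nonneg (key r hrpos)
        rw [Complex.add_re, Complex.mul_re, Complex.ofReal_re, Complex.ofReal_im,
          hcim] at hkey
        have hr2 : r * (2 * (c.re + 1)) = -d.re := by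
          rw [hr_def]
          field_simp
        have h3 : 0 ≤ (r * c.re + d.re) * (2 * (c.re + 1)) :=
          mul_nonneg (by simpa using hkey) (by linarith)
        nlinarith [h3, hr2, hcre, hcon]
      rw [Complex.le_def]
      refine ⟨by simpa using hdre, by simp [hdim]⟩
end

section
/- Let φ : M_k → M_m be linear. Then φ : M_k → OMAX(M_m) is completely positive if and only if there exist finitely many positive linear functionals s_l : M_k → ℂ and positive matrices P_l ∈ M_m^+ such that φ(X) = ∑_l s_l(X) P_l for all X. -/
open scoped ComplexOrder
open Finset

/-- Flatten a `p × p` block matrix with `n × n` blocks to an `np × np` matrix. -/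
def flattenC {p n : ℕ} (M : Matrix (Fin p) (Fin p) (Matrix (Fin n) (Fin n) ℂ)) :
    Matrix (Fin p × Fin n) (Fin p × Fin n) ℂ :=
  Matrix.of fun a b => M a.1 b.1 a.2 b.2

/-- Positivity of an element of `M_p(M_n)` via the identification with `M_{pn}`. -/
def BlockPSD {p n : ℕ} (M : Matrix (Fin p) (Fin p) (Matrix (Fin n) (Fin n) ℂ)) : Prop :=
  (flattenC M).PosSemidef


section AuxProofs
open Matrix

section Polar
variable {n : ℕ}

def esgl (i : Fin n) : Fin n → ℂ := Pi.single i 1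

lemma star_single (i : Fin n) : star (esgl i) = esgl i := by
  funext p
  by_cases h : p = i <;> simp [esgl, Pi.single_apply, h]

lemma dot_single (A : Matrix (Fin n) (Fin n) ℂ) (i j : Fin n) :
    star (esgl i) ⬝ᵥ A *ᵥ esgl j = A i j := by
  rw [star_single]
  simp [esgl, Matrix.mulVec_single, dotProduct, Pi.single_apply]

lemma posSemidef_of_dot (A : Matrix (Fin n) (Fin n) ℂ)
    (h : ∀ x, 0 ≤ star x ⬝ᵥ A *ᵥ x) : A.PosSemidef := by
  refine Matrix.PosSemidef.of_dotProduct_mulVec_nonneg ?_ h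
  have him : ∀ x, (star x ⬝ᵥ A *ᵥ x).im = 0 := by
    intro x
    have := h x
    rw [Complex.le_def] at this
    exact this.2.symm
  have key : ∀ x y : Fin n → ℂ,
      star (x + y) ⬝ᵥ A *ᵥ (x + y) =
        star x ⬝ᵥ A *ᵥ x + star x ⬝ᵥ A *ᵥ y + star y ⬝ᵥ A *ᵥ x + star y ⬝ᵥ A *ᵥ y := by
    intro x y
    rw [star_add, Matrix.mulVec_add, add_dotProduct, dotProduct_add,
      dotProduct_add]
    ring
  ext i j
  set u := A i j with hu
  set v := A j i with hv
  have hii : (A i i).im = 0 := by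
    have := him (esgl i); rwa [dot_single] at this
  have hjj : (A j j).im = 0 := by
    have := him (esgl j); rwa [dot_single] at this
  have h1 : (u + v).im = 0 := by
    have := him (esgl i + esgl j)
    rw [key, dot_single, dot_single, dot_single, dot_single] at this
    simp only [Complex.add_im] at this
    rw [← hu, ← hv] at this
    simp only [Complex.add_im]
    linarith [this]
  have h2 : (u - v).re = 0 := by
    have := him (esgl i + Complex.I • esgl j)
    rw [key] at this
    have e1 : star (esgl i) ⬝ᵥ A *ᵥ (Complex.I • esgl j) = Complex.I * u := by
      rw [Matrix.mulVec_smul, dotProduct_smul, dot_single, smul_eq_mul, hu]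
    have e2 : star (Complex.I • esgl j) ⬝ᵥ A *ᵥ esgl i = -Complex.I * v := by
      rw [star_smul, smul_dotProduct, dot_single]
      simp [Complex.star_def, Complex.conj_I, hv]
    have e3 : star (Complex.I • esgl j) ⬝ᵥ A *ᵥ (Complex.I • esgl j) = A j j := by
      rw [star_smul, smul_dotProduct, Matrix.mulVec_smul, dotProduct_smul,
        dot_single]
      simp only [Complex.star_def, Complex.conj_I, smul_eq_mul, ← mul_assoc, neg_mul,
        Complex.I_mul_I, neg_neg, one_mul]
    rw [e1, e2, e3, dot_single] at this
    simp only [Complex.add_im, Complex.mul_im, Complex.I_re, Complex.I_im, Complex.neg_im,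
      Complex.neg_re] at this
    simp only [Complex.sub_re]
    nlinarith [this, hii, hjj]
  have hfin : (starRingEnd ℂ) v = u := by
    apply Complex.ext
    · have h2' := h2; simp only [Complex.sub_re] at h2'
      simp only [Complex.conj_re]; linarith
    · have h1' := h1; simp only [Complex.add_im] at h1'
      simp only [Complex.conj_im]; linarith
  simpa [Matrix.conjTranspose_apply, hu, hv] using hfin

end Polar

section PSDBasic
variable {n : ℕ}

lemma psd_smul {r : ℝ} (hr : 0 ≤ r) {A : Matrix (Fin n) (Fin n) ℂ} (hA : A.PosSemidef) :
    ((r : ℂ) • A).PosSemidef := by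
  apply posSemidef_of_dot
  intro x
  rw [Matrix.smul_mulVec, dotProduct_smul, smul_eq_mul]
  exact mul_nonneg (by exact_mod_cast hr) (hA.dotProduct_mulVec_nonneg x)

lemma psd_trace_re_nonneg {A : Matrix (Fin n) (Fin n) ℂ} (hA : A.PosSemidef) :
    0 ≤ A.trace.re := by
  have : ∀ i, 0 ≤ A i i := fun i => by
    have := hA.dotProduct_mulVec_nonneg (esgl i); rwa [dot_single] at this
  have : 0 ≤ A.trace := Finset.sum_nonneg fun i _ => this i
  exact (Complex.le_def.mp this).1

lemma psd_trace_im {A : Matrix (Fin n) (Fin n) ℂ} (hA : A.PosSemidef) :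
    A.trace.im = 0 := by
  have : ∀ i, 0 ≤ A i i := fun i => by
    have := hA.dotProduct_mulVec_nonneg (esgl i); rwa [dot_single] at this
  have h : 0 ≤ A.trace := Finset.sum_nonneg fun i _ => this i
  exact ((Complex.le_def.mp h).2).symm

section PF
open scoped MatrixOrder
lemma psd_factor {n : ℕ} {A : Matrix (Fin n) (Fin n) ℂ} (hA : A.PosSemidef) :
    ∃ B : Matrix (Fin n) (Fin n) ℂ, A = Bᴴ * B := by
  have h0 : 0 ≤ A := Matrix.nonneg_iff_posSemidef.mpr hA
  refine ⟨CFC.sqrt A, ?_⟩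
  have hs : (CFC.sqrt A)ᴴ = CFC.sqrt A := (CFC.sqrt_nonneg A).isSelfAdjoint
  rw [hs, CFC.sqrt_mul_sqrt_self A h0]
end PF

lemma psd_eq_zero_of_trace {A : Matrix (Fin n) (Fin n) ℂ} (hA : A.PosSemidef)
    (h : A.trace.re = 0) : A = 0 := by
  obtain ⟨B, rfl⟩ := psd_factor hA
  have htr : (Bᴴ * B).trace = ∑ i, ∑ p, (starRingEnd ℂ) (B p i) * B p i := by
    simp [Matrix.trace, Matrix.diag, Matrix.mul_apply, Matrix.conjTranspose_apply]
  have hre : (Bᴴ * B).trace.re = ∑ i, ∑ p, Complex.normSq (B p i) := by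
    rw [htr, Complex.re_sum]
    refine Finset.sum_congr rfl fun i _ => ?_
    rw [Complex.re_sum]
    refine Finset.sum_congr rfl fun p _ => ?_
    rw [mul_comm, Complex.mul_conj]
    simp
  rw [hre] at h
  have hz : ∀ p i, B p i = 0 := by
    intro p i
    have h1 : ∀ i ∈ (univ : Finset (Fin n)), 0 ≤ ∑ p, Complex.normSq (B p i) :=
      fun i _ => Finset.sum_nonneg fun p _ => Complex.normSq_nonneg _
    have h2 := (Finset.sum_eq_zero_iff_of_nonneg h1).mp h i (mem_univ i)
    have h3 := (Finset.sum_eq_zero_iff_of_nonneg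
      (fun p _ => Complex.normSq_nonneg (B p i))).mp h2 p (mem_univ p)
    exact Complex.normSq_eq_zero.mp h3
  have : B = 0 := by ext p i; exact hz p i
  rw [this]
  simp

lemma psd_diag_re {A : Matrix (Fin n) (Fin n) ℂ} (hA : A.PosSemidef) (i : Fin n) :
    0 ≤ (A i i).re ∧ (A i i).im = 0 := by
  have h : 0 ≤ A i i := by
    have := hA.dotProduct_mulVec_nonneg (esgl i); rwa [dot_single] at this
  exact ⟨(Complex.le_def.mp h).1, ((Complex.le_def.mp h).2).symm⟩

lemma psd_entry_sq_bound {A : Matrix (Fin n) (Fin n) ℂ} (hA : A.PosSemidef) (i j : Fin n) :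
    ‖A i j‖ ^ 2 ≤ (A i i).re * (A j j).re := by
  obtain ⟨B, rfl⟩ := psd_factor hA
  have hentry : ∀ i j, (Bᴴ * B) i j = ∑ p, (starRingEnd ℂ) (B p i) * B p j := by
    intro i j; simp [Matrix.mul_apply, Matrix.conjTranspose_apply]
  have hdiag : ∀ i, ((Bᴴ * B) i i).re = ∑ p, ‖B p i‖ ^ 2 := by
    intro i
    rw [hentry, Complex.re_sum]
    refine Finset.sum_congr rfl fun p _ => ?_
    rw [mul_comm, Complex.mul_conj, Complex.sq_norm]
    simp
  rw [hdiag, hdiag, hentry]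
  calc ‖∑ p, (starRingEnd ℂ) (B p i) * B p j‖ ^ 2
      ≤ (∑ p, ‖B p i‖ * ‖B p j‖) ^ 2 := by
        apply pow_le_pow_left₀ (norm_nonneg _)
        refine le_trans (norm_sum_le _ _) (le_of_eq ?_)
        refine Finset.sum_congr rfl fun p _ => ?_
        rw [norm_mul]
        simp
    _ ≤ (∑ p, ‖B p i‖ ^ 2) * ∑ p, ‖B p j‖ ^ 2 :=
        Finset.sum_mul_sq_le_sq_mul_sq univ _ _

lemma pos_pairing {n : ℕ} {a X : Matrix (Fin n) (Fin n) ℂ} (ha : a.PosSemidef)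
    (hX : X.PosSemidef) : 0 ≤ ∑ i, ∑ j, a i j * X i j := by
  obtain ⟨C, rfl⟩ := psd_factor hX
  have key : ∑ i, ∑ j, a i j * (Cᴴ * C) i j
      = ∑ q, star (fun i => C q i) ⬝ᵥ a *ᵥ (fun j => C q j) := by
    have l1 : ∑ i, ∑ j, a i j * (Cᴴ * C) i j
        = ∑ i, ∑ j, ∑ q, a i j * ((starRingEnd ℂ) (C q i) * C q j) := by
      refine Finset.sum_congr rfl fun i _ => Finset.sum_congr rfl fun j _ => ?_
      rw [Matrix.mul_apply, Finset.mul_sum]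
      refine Finset.sum_congr rfl fun q _ => ?_
      rw [Matrix.conjTranspose_apply]
      rfl
    rw [l1]
    have l2 : ∀ i, ∑ j, ∑ q, a i j * ((starRingEnd ℂ) (C q i) * C q j)
        = ∑ q, ∑ j, a i j * ((starRingEnd ℂ) (C q i) * C q j) :=
      fun i => Finset.sum_comm
    simp_rw [l2]
    rw [Finset.sum_comm]
    refine Finset.sum_congr rfl fun q _ => ?_
    rw [dotProduct]
    refine Finset.sum_congr rfl fun i _ => ?_
    rw [Pi.star_apply, Matrix.mulVec, dotProduct, Finset.mul_sum]
    refine Finset.sum_congr rfl fun j _ => ?_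
    simp only [RCLike.star_def]
    ring
  rw [key]
  exact Finset.sum_nonneg fun q _ => ha.dotProduct_mulVec_nonneg _

end PSDBasic

section DmaxLemmas
variable {V : Type*} [AddCommGroup V] [Module ℂ V]

lemma eTensor_smul {n : ℕ} (c : ℂ) (a : Matrix (Fin n) (Fin n) ℂ) (v : V) :
    eTensor (c • a) v = c • eTensor a v := by
  ext p q
  simp [eTensor, smul_smul]

lemma eTensor_mem_Dmax {pos : Set V} {n : ℕ} {a : Matrix (Fin n) (Fin n) ℂ} {v : V}
    (ha : a.PosSemidef) (hv : v ∈ pos) : eTensor a v ∈ Dmax pos n :=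
  ⟨1, fun _ => a, fun _ => v, fun _ => ha, fun _ => hv, by simp⟩

lemma Dmax_zero {pos : Set V} {n : ℕ} : (0 : Matrix (Fin n) (Fin n) V) ∈ Dmax pos n :=
  ⟨0, Fin.elim0, Fin.elim0, fun i => i.elim0, fun i => i.elim0, by simp⟩

lemma Dmax_add {pos : Set V} {n : ℕ} {M N : Matrix (Fin n) (Fin n) V}
    (hM : M ∈ Dmax pos n) (hN : N ∈ Dmax pos n) : M + N ∈ Dmax pos n := by
  obtain ⟨k1, a1, v1, ha1, hv1, rfl⟩ := hM
  obtain ⟨k2, a2, v2, ha2, hv2, rfl⟩ := hN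
  refine ⟨k1 + k2, Fin.append a1 a2, Fin.append v1 v2, ?_, ?_, ?_⟩
  · intro i
    rcases Nat.lt_or_ge (i : ℕ) k1 with h | h
    · have : i = Fin.castAdd k2 ⟨i, h⟩ := by ext; simp
      rw [this, Fin.append_left]; exact ha1 _
    · have : i = Fin.natAdd k1 ⟨i - k1, by omega⟩ := by ext; simp; omega
      rw [this, Fin.append_right]; exact ha2 _
  · intro i
    rcases Nat.lt_or_ge (i : ℕ) k1 with h | h
    · have : i = Fin.castAdd k2 ⟨i, h⟩ := by ext; simp
      rw [this, Fin.append_left]; exact hv1 _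
    · have : i = Fin.natAdd k1 ⟨i - k1, by omega⟩ := by ext; simp; omega
      rw [this, Fin.append_right]; exact hv2 _
  · rw [Fin.sum_univ_add]
    congr 1
    · exact Finset.sum_congr rfl fun i _ => by rw [Fin.append_left, Fin.append_left]
    · exact Finset.sum_congr rfl fun i _ => by rw [Fin.append_right, Fin.append_right]

lemma Dmax_sum {pos : Set V} {n : ℕ} {ι : Type*} (t : Finset ι)
    (f : ι → Matrix (Fin n) (Fin n) V) (hf : ∀ i ∈ t, f i ∈ Dmax pos n) :
    ∑ i ∈ t, f i ∈ Dmax pos n := by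
  classical
  induction t using Finset.induction_on with
  | empty => simpa using Dmax_zero
  | insert _ _ hnot ih =>
    rw [Finset.sum_insert hnot]
    exact Dmax_add (hf _ (Finset.mem_insert_self _ _))
      (ih fun i hi => hf i (Finset.mem_insert_of_mem hi))

lemma Dmax_smul {pos : Set V} {n : ℕ} {r : ℝ} (hr : 0 ≤ r) {M : Matrix (Fin n) (Fin n) V}
    (hM : M ∈ Dmax pos n) : (r : ℂ) • M ∈ Dmax pos n := by
  obtain ⟨k, a, v, ha, hv, rfl⟩ := hM
  refine ⟨k, fun i => (r : ℂ) • a i, v, fun i => psd_smul hr (ha i), hv, ?_⟩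
  rw [Finset.smul_sum]
  exact Finset.sum_congr rfl fun i _ => (eTensor_smul _ _ _).symm

end DmaxLemmas

section CompactHull

lemma sum_fin_of_vanish {α : Type*} [AddCommMonoid α] {c N : ℕ} (hc : c ≤ N) (f : ℕ → α)
    (hf : ∀ j, c ≤ j → f j = 0) : ∑ i : Fin N, f i = ∑ i : Fin c, f i := by
  rw [Fin.sum_univ_eq_sum_range, Fin.sum_univ_eq_sum_range]
  symm
  apply Finset.sum_subset (Finset.range_subset_range.mpr hc)
  intro j _ hj
  exact hf j (by simpa using hj)

variable {E : Type*} [AddCommGroup E] [Module ℝ E] [TopologicalSpace E]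
  [IsTopologicalAddGroup E] [ContinuousSMul ℝ E] [FiniteDimensional ℝ E]

lemma isCompact_convexHull_of_isCompact {K : Set E} (hK : IsCompact K) (hne : K.Nonempty) :
    IsCompact (convexHull ℝ K) := by
  classical
  obtain ⟨x₀, hx₀⟩ := hne
  set N := Module.finrank ℝ E + 1 with hN
  have himg : convexHull ℝ K =
      (fun p : (Fin N → ℝ) × (Fin N → E) => ∑ i, p.1 i • p.2 i) ''
        (stdSimplex ℝ (Fin N) ×ˢ Set.univ.pi fun _ => K) := by
    apply Set.Subset.antisymm
    · intro x hx
      obtain ⟨ι, hι, z, w, hrange, hai, hpos, hsum, hx⟩ :=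
        eq_pos_convex_span_of_mem_convexHull hx
      haveI := hι
      have hc : Fintype.card ι ≤ N :=
        le_trans hai.card_le_finrank_succ (Nat.add_le_add_right (Submodule.finrank_le _) 1)
      set c := Fintype.card ι with hcdef
      have e : ι ≃ Fin c := Fintype.equivFin ι
      set gw : ℕ → ℝ := fun j => if h : j < c then w (e.symm ⟨j, h⟩) else 0 with hgw
      set gz : ℕ → E := fun j => if h : j < c then z (e.symm ⟨j, h⟩) else x₀ with hgz
      refine ⟨⟨fun i => gw i, fun i => gz i⟩, ⟨⟨fun i => ?_, ?_⟩, fun i _ => ?_⟩, ?_⟩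
      · by_cases h : (i : ℕ) < c
        · simp only [hgw, dif_pos h]; exact le_of_lt (hpos _)
        · simp only [hgw, dif_neg h]; exact le_rfl
      · rw [sum_fin_of_vanish hc gw (fun j hj => by
          simp only [hgw, dif_neg (Nat.not_lt.mpr hj)])]
        have h1 : ∀ i : Fin c, gw i = w (e.symm i) := fun i => by
          simp only [hgw]; rw [dif_pos i.2]
        rw [Finset.sum_congr rfl fun i _ => h1 i, Equiv.sum_comp e.symm w]
        convert hsum
      · by_cases h : (i : ℕ) < c
        · simp only [hgz, dif_pos h]; exact hrange (Set.mem_range_self _)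
        · simp only [hgz, dif_neg h]; exact hx₀
      · simp only
        rw [sum_fin_of_vanish hc (fun j => gw j • gz j) (fun j hj => by
          have : gw j = 0 := by simp only [hgw, dif_neg (Nat.not_lt.mpr hj)]
          rw [this, zero_smul])]
        have h1 : ∀ i : Fin c, gw i • gz i = w (e.symm i) • z (e.symm i) := fun i => by
          simp only [hgw, hgz]; rw [dif_pos i.2, dif_pos i.2]
        rw [Finset.sum_congr rfl fun i _ => h1 i,
          Equiv.sum_comp e.symm (fun t => w t • z t)]
        convert hx
    · rintro _ ⟨⟨w, z⟩, ⟨hw, hz⟩, rfl⟩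
      exact (convex_convexHull ℝ K).sum_mem (fun i _ => hw.1 i) hw.2
        (fun i _ => subset_convexHull ℝ K (hz i trivial))
  rw [himg]
  refine ((isCompact_stdSimplex (𝕜 := ℝ) (ι := Fin N)).prod (isCompact_univ_pi fun _ => hK)).image ?_
  exact continuous_finset_sum _ fun i _ =>
    ((continuous_apply i).comp continuous_fst).smul ((continuous_apply i).comp continuous_snd)

end CompactHull

section Closedness

lemma cont_entry2 {a b : ℕ} (p : Fin a) (q : Fin b) :
    Continuous fun x : Matrix (Fin a) (Fin b) ℂ => x p q :=
  continuous_apply_apply p q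

lemma cont_entry4 {a b c d : ℕ} (p : Fin a) (q : Fin b) (i : Fin c) (j : Fin d) :
    Continuous fun x : Matrix (Fin a) (Fin b) (Matrix (Fin c) (Fin d) ℂ) => x p q i j :=
  (continuous_apply_apply i j).comp (continuous_apply_apply p q)

lemma isClosed_nonnegC : IsClosed {z : ℂ | 0 ≤ z} := by
  have h : {z : ℂ | 0 ≤ z} = Complex.re ⁻¹' Set.Ici 0 ∩ Complex.im ⁻¹' {0} := by
    ext z
    simp only [Set.mem_setOf_eq, Complex.le_def, Set.mem_inter_iff, Set.mem_preimage,
      Set.mem_Ici, Set.mem_singleton_iff]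
    constructor
    · rintro ⟨h1, h2⟩; exact ⟨by simpa using h1, h2.symm⟩
    · rintro ⟨h1, h2⟩; exact ⟨by simpa using h1, h2.symm⟩
  rw [h]
  exact (isClosed_Ici.preimage Complex.continuous_re).inter
    (isClosed_singleton.preimage Complex.continuous_im)

lemma cont_quadform {n : ℕ} (x : Fin n → ℂ) :
    Continuous fun A : Matrix (Fin n) (Fin n) ℂ => star x ⬝ᵥ A *ᵥ x := by
  have : (fun A : Matrix (Fin n) (Fin n) ℂ => star x ⬝ᵥ A *ᵥ x) =
      fun A => ∑ p, star (x p) * ∑ q, A p q * x q := by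
    funext A; rfl
  rw [this]
  exact continuous_finset_sum _ fun p _ => continuous_const.mul
    (continuous_finset_sum _ fun q _ => (cont_entry2 p q).mul continuous_const)

lemma isClosed_psd {n : ℕ} : IsClosed {A : Matrix (Fin n) (Fin n) ℂ | A.PosSemidef} := by
  have h : {A : Matrix (Fin n) (Fin n) ℂ | A.PosSemidef} =
      ⋂ x : Fin n → ℂ, (fun A : Matrix (Fin n) (Fin n) ℂ => star x ⬝ᵥ A *ᵥ x) ⁻¹' {z | 0 ≤ z} := by
    ext A
    simp only [Set.mem_setOf_eq, Set.mem_iInter, Set.mem_preimage]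
    exact ⟨fun h x => h.dotProduct_mulVec_nonneg x, posSemidef_of_dot A⟩
  rw [h]
  exact isClosed_iInter fun x => isClosed_nonnegC.preimage (cont_quadform x)

def Sset (n : ℕ) : Set (Matrix (Fin n) (Fin n) ℂ) :=
  {A | A.PosSemidef ∧ A.trace = 1}

lemma cont_traceC {n : ℕ} : Continuous fun A : Matrix (Fin n) (Fin n) ℂ => A.trace := by
  have : (fun A : Matrix (Fin n) (Fin n) ℂ => A.trace) = fun A => ∑ i, A i i := by
    funext A; rfl
  rw [this]
  exact continuous_finset_sum _ fun i _ => cont_entry2 i i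

lemma isCompact_Sset (n : ℕ) : IsCompact (Sset n) := by
  have hclosed : IsClosed (Sset n) := by
    have : Sset n = {A : Matrix (Fin n) (Fin n) ℂ | A.PosSemidef} ∩
        (fun A : Matrix (Fin n) (Fin n) ℂ => A.trace) ⁻¹' {1} := rfl
    rw [this]
    exact isClosed_psd.inter (isClosed_singleton.preimage cont_traceC)
  have hbox : IsCompact {A : Matrix (Fin n) (Fin n) ℂ |
      ∀ i, ∀ j, A i j ∈ Metric.closedBall (0 : ℂ) 1} := by
    have : {A : Matrix (Fin n) (Fin n) ℂ | ∀ i, ∀ j, A i j ∈ Metric.closedBall (0 : ℂ) 1} =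
        Set.pi Set.univ fun _ : Fin n => Set.pi Set.univ fun _ : Fin n =>
          Metric.closedBall (0 : ℂ) 1 := by
      ext A
      constructor
      · intro h
        exact fun i _ j _ => h i j
      · intro h i j
        exact h i (Set.mem_univ i) j (Set.mem_univ j)
    rw [this]
    exact isCompact_univ_pi fun _ => isCompact_univ_pi fun _ =>
      isCompact_closedBall 0 1
  refine hbox.of_isClosed_subset hclosed ?_
  rintro A ⟨hA, htr⟩ i j
  simp only [Metric.mem_closedBall, dist_zero_right]
  have hsq := psd_entry_sq_bound hA i j
  have hdiag_le : ∀ i, (A i i).re ≤ 1 := by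
    intro i
    have h1 : A.trace.re = ∑ p, (A p p).re := by
      rw [show A.trace = ∑ p, A p p from rfl, Complex.re_sum]
    have h2 : ∑ p, (A p p).re = 1 := by rw [← h1, htr]; simp
    have h3 : ∀ p, 0 ≤ (A p p).re := fun p => (psd_diag_re hA p).1
    calc (A i i).re ≤ ∑ p, (A p p).re :=
          Finset.single_le_sum (fun p _ => h3 p) (mem_univ i)
      _ = 1 := h2
  nlinarith [norm_nonneg (A i j), (psd_diag_re hA i).1, (psd_diag_re hA j).1,
    hdiag_le i, hdiag_le j]

end Closedness

section Main

variable {n m : ℕ}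

lemma rsmulC {a b : ℕ} (r : ℝ) (A : Matrix (Fin a) (Fin b) ℂ) : r • A = (r : ℂ) • A := by
  ext i j
  simp [Complex.real_smul]

lemma rsmulW (r : ℝ) (x : Matrix (Fin n) (Fin n) (Matrix (Fin m) (Fin m) ℂ)) :
    r • x = (r : ℂ) • x :=
  Matrix.ext fun p q => rsmulC r (x p q)

lemma eTensor_smul_right {V : Type*} [AddCommGroup V] [Module ℂ V] {k : ℕ}
    (c : ℂ) (a : Matrix (Fin k) (Fin k) ℂ) (v : V) :
    eTensor a (c • v) = c • eTensor a v := by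
  ext p q
  show a p q • (c • v) = c • (a p q • v)
  exact smul_comm _ _ _

lemma eTensor_zero_left {V : Type*} [AddCommGroup V] [Module ℂ V] {k : ℕ} (v : V) :
    eTensor (0 : Matrix (Fin k) (Fin k) ℂ) v = 0 := by
  ext p q
  simp [eTensor]

lemma eTensor_zero_right {V : Type*} [AddCommGroup V] [Module ℂ V] {k : ℕ}
    (a : Matrix (Fin k) (Fin k) ℂ) : eTensor a (0 : V) = 0 := by
  ext p q
  simp [eTensor]

noncomputable def Lfun (x : Matrix (Fin n) (Fin n) (Matrix (Fin m) (Fin m) ℂ)) : ℝ :=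
  (∑ p, (x p p).trace).re

lemma Lfun_cont : Continuous (Lfun (n := n) (m := m)) := by
  apply Complex.continuous_re.comp
  exact continuous_finset_sum _ fun p _ => continuous_finset_sum _ fun i _ => cont_entry4 p p i i

lemma Lfun_add (x y : Matrix (Fin n) (Fin n) (Matrix (Fin m) (Fin m) ℂ)) :
    Lfun (x + y) = Lfun x + Lfun y := by
  simp [Lfun, Matrix.trace, Matrix.diag, Finset.sum_add_distrib, Complex.add_re]

lemma Lfun_rsmul (r : ℝ) (x : Matrix (Fin n) (Fin n) (Matrix (Fin m) (Fin m) ℂ)) :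
    Lfun (r • x) = r * Lfun x := by
  have h1 : ∀ p, ((r • x) p p).trace = r • (x p p).trace := fun p => by
    rw [Matrix.smul_apply, Matrix.trace_smul]
  unfold Lfun
  rw [Finset.sum_congr rfl fun p _ => h1 p, ← Finset.smul_sum, Complex.smul_re, smul_eq_mul]

lemma psd_trace_eq_re {k : ℕ} {A : Matrix (Fin k) (Fin k) ℂ} (hA : A.PosSemidef) :
    A.trace = ((A.trace.re : ℝ) : ℂ) := by
  apply Complex.ext
  · simp
  · simp [psd_trace_im hA]

lemma Lfun_tensor (a : Matrix (Fin n) (Fin n) ℂ) (v : Matrix (Fin m) (Fin m) ℂ) :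
    Lfun (eTensor a v) = (a.trace * v.trace).re := by
  have h : ∑ p, ((eTensor a v) p p).trace = a.trace * v.trace := by
    have h2 : ∀ p, ((eTensor a v) p p).trace = a p p * v.trace := fun p => by
      show ((Matrix.of fun p q => a p q • v) p p).trace = _
      rw [Matrix.of_apply, Matrix.trace_smul, smul_eq_mul]
    rw [Finset.sum_congr rfl fun p _ => h2 p, ← Finset.sum_mul]
    rfl
  unfold Lfun
  rw [h]

lemma Sset_nonempty (hn : 0 < n) : (Sset n).Nonempty := by
  refine ⟨(((n : ℝ)⁻¹ : ℝ) : ℂ) • 1, psd_smul (by positivity) Matrix.PosSemidef.one, ?_⟩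
  rw [Matrix.trace_smul, Matrix.trace_one]
  simp only [smul_eq_mul]
  have h : (Fintype.card (Fin n) : ℂ) = (n : ℂ) := by simp
  rw [h]
  have hn' : (n : ℝ) ≠ 0 := Nat.cast_ne_zero.mpr hn.ne'
  push_cast
  field_simp

theorem isClosed_Dmax (hn : 0 < n) (hm : 0 < m) :
    IsClosed (Dmax {X : Matrix (Fin m) (Fin m) ℂ | X.PosSemidef} n) := by
  classical
  set pos : Set (Matrix (Fin m) (Fin m) ℂ) := {X | X.PosSemidef} with hpos
  set K : Set (Matrix (Fin n) (Fin n) (Matrix (Fin m) (Fin m) ℂ)) :=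
    (fun p : Matrix (Fin n) (Fin n) ℂ × Matrix (Fin m) (Fin m) ℂ => eTensor p.1 p.2) ''
      (Sset n ×ˢ Sset m) with hK
  have hKcomp : IsCompact K := by
    refine ((isCompact_Sset n).prod (isCompact_Sset m)).image ?_
    apply continuous_matrix
    intro p q
    exact ((cont_entry2 p q).comp continuous_fst).smul continuous_snd
  obtain ⟨a₀, ha₀⟩ := Sset_nonempty hn
  obtain ⟨v₀, hv₀⟩ := Sset_nonempty hm
  have hk₀ : eTensor a₀ v₀ ∈ K := ⟨⟨a₀, v₀⟩, ⟨ha₀, hv₀⟩, rfl⟩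
  set k₀ := eTensor a₀ v₀
  set CH := convexHull ℝ K with hCH
  have hCHcomp : IsCompact CH := isCompact_convexHull_of_isCompact hKcomp ⟨k₀, hk₀⟩
  have hk₀CH : k₀ ∈ CH := subset_convexHull ℝ K hk₀
  have hL1 : ∀ y ∈ K, Lfun y = 1 := by
    rintro _ ⟨⟨a, v⟩, ⟨⟨haP, haT⟩, hvP, hvT⟩, rfl⟩
    rw [Lfun_tensor, haT, hvT]
    simp
  have hLCH : ∀ c ∈ CH, Lfun c = 1 := by
    have hconv : Convex ℝ {x : Matrix (Fin n) (Fin n) (Matrix (Fin m) (Fin m) ℂ) |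
        Lfun x = 1} := by
      intro x hx y hy a b ha hb hab
      simp only [Set.mem_setOf_eq] at hx hy ⊢
      rw [Lfun_add, Lfun_rsmul, Lfun_rsmul, hx, hy]
      simpa using hab
    intro c hc
    exact convexHull_min (fun y hy => hL1 y hy) hconv hc
  have hKD : K ⊆ Dmax pos n := by
    rintro _ ⟨⟨a, v⟩, ⟨⟨haP, _⟩, hvP, _⟩, rfl⟩
    exact eTensor_mem_Dmax haP hvP
  have hDconv : Convex ℝ (Dmax pos n) := by
    intro x hx y hy a b ha hb _
    rw [rsmulW, rsmulW]
    exact Dmax_add (Dmax_smul ha hx) (Dmax_smul hb hy)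
  have hCHD : CH ⊆ Dmax pos n := convexHull_min hKD hDconv
  set D' : Set (Matrix (Fin n) (Fin n) (Matrix (Fin m) (Fin m) ℂ)) :=
    (fun p : ℝ × Matrix (Fin n) (Fin n) (Matrix (Fin m) (Fin m) ℂ) => p.1 • p.2) ''
      (Set.Ici (0 : ℝ) ×ˢ CH) with hD'
  have hEq : Dmax pos n = D' := by
    apply Set.Subset.antisymm
    · rintro M ⟨q, a, v, ha, hv, rfl⟩
      set α : Fin q → ℝ := fun i => (a i).trace.re with hα
      set β : Fin q → ℝ := fun i => (v i).trace.re with hβ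
      set t : Fin q → ℝ := fun i => α i * β i with ht
      have htnn : ∀ i, 0 ≤ t i := fun i =>
        mul_nonneg (psd_trace_re_nonneg (ha i)) (psd_trace_re_nonneg (hv i))
      have hterm0 : ∀ i, t i = 0 → eTensor (a i) (v i) = 0 := by
        intro i hti
        rcases mul_eq_zero.mp hti with h | h
        · rw [psd_eq_zero_of_trace (ha i) h, eTensor_zero_left]
        · rw [psd_eq_zero_of_trace (hv i) h, eTensor_zero_right]
      have htpos : ∀ i, 0 < t i → 0 < α i ∧ 0 < β i := by
        intro i hi
        rcases mul_pos_iff.mp hi with ⟨h1, h2⟩ | ⟨h1, h2⟩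
        · exact ⟨h1, h2⟩
        · exact absurd (psd_trace_re_nonneg (ha i)) (not_le.mpr h1)
      set κ : Fin q → Matrix (Fin n) (Fin n) (Matrix (Fin m) (Fin m) ℂ) := fun i =>
        if h : 0 < t i then
          eTensor ((((α i)⁻¹ : ℝ) : ℂ) • a i) ((((β i)⁻¹ : ℝ) : ℂ) • v i) else k₀
        with hκ
      have hκK : ∀ i, κ i ∈ K := by
        intro i
        by_cases h : 0 < t i
        · obtain ⟨hα1, hβ1⟩ := htpos i h
          have h1 : (((α i)⁻¹ : ℝ) : ℂ) • a i ∈ Sset n := by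
            refine ⟨psd_smul (by positivity) (ha i), ?_⟩
            rw [Matrix.trace_smul, smul_eq_mul, psd_trace_eq_re (ha i),
              ← Complex.ofReal_mul, inv_mul_cancel₀ hα1.ne']
            simp
          have h2 : (((β i)⁻¹ : ℝ) : ℂ) • v i ∈ Sset m := by
            refine ⟨psd_smul (by positivity) (hv i), ?_⟩
            rw [Matrix.trace_smul, smul_eq_mul, psd_trace_eq_re (hv i),
              ← Complex.ofReal_mul, inv_mul_cancel₀ hβ1.ne']
            simp
          simp only [hκ, dif_pos h]
          exact ⟨⟨_, _⟩, ⟨h1, h2⟩, rfl⟩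
        · simp only [hκ, dif_neg h]
          exact hk₀
      have hsplit : ∀ i, eTensor (a i) (v i) = t i • κ i := by
        intro i
        by_cases h : 0 < t i
        · obtain ⟨hα1, hβ1⟩ := htpos i h
          simp only [hκ, dif_pos h]
          rw [eTensor_smul, eTensor_smul_right, rsmulW, smul_smul, smul_smul]
          have hc1 : ((t i : ℝ) : ℂ) * (((α i)⁻¹ : ℝ) : ℂ) * (((β i)⁻¹ : ℝ) : ℂ) = 1 := by
            have h0 : t i = α i * β i := rfl
            rw [h0, ← Complex.ofReal_mul, ← Complex.ofReal_mul, ← Complex.ofReal_one]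
            congr 1
            field_simp
          rw [hc1, one_smul]
        · have hti : t i = 0 := le_antisymm (not_lt.mp h) (htnn i)
          rw [hterm0 i hti, hti, zero_smul]
      set T := ∑ i, t i with hT
      have hTnn : 0 ≤ T := Finset.sum_nonneg fun i _ => htnn i
      rcases eq_or_lt_of_le hTnn with hT0 | hTpos
      · have hall : ∀ i ∈ (univ : Finset (Fin q)), t i = 0 :=
          (Finset.sum_eq_zero_iff_of_nonneg fun i _ => htnn i).mp hT0.symm
        have hM0 : ∑ i, eTensor (a i) (v i) = 0 :=
          Finset.sum_eq_zero fun i hi => hterm0 i (hall i hi)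
        rw [hM0]
        exact ⟨⟨0, k₀⟩, ⟨Set.self_mem_Ici, hk₀CH⟩, by simp⟩
      · set c := ∑ i, (t i / T) • κ i with hc
        have hcCH : c ∈ CH := by
          refine (convex_convexHull ℝ K).sum_mem
            (fun i _ => div_nonneg (htnn i) hTnn) ?_
            (fun i _ => subset_convexHull ℝ K (hκK i))
          rw [← Finset.sum_div, ← hT, div_self hTpos.ne']
        refine ⟨⟨T, c⟩, ⟨Set.mem_Ici.mpr hTnn, hcCH⟩, ?_⟩
        show T • c = ∑ i, eTensor (a i) (v i)
        rw [hc, Finset.smul_sum]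
        refine Finset.sum_congr rfl fun i _ => ?_
        rw [smul_smul, mul_comm T, div_mul_cancel₀ _ hTpos.ne', ← hsplit i]
    · rintro _ ⟨⟨r, c⟩, ⟨hr, hc⟩, rfl⟩
      show r • c ∈ Dmax pos n
      rw [rsmulW]
      exact Dmax_smul hr (hCHD hc)
  rw [hEq]
  apply isClosed_of_closure_subset
  intro x hx
  have hD'L : D' ⊆ {y | 0 ≤ Lfun y} := by
    rintro _ ⟨⟨r, c⟩, ⟨hr, hc⟩, rfl⟩
    show 0 ≤ Lfun (r • c)
    rw [Lfun_rsmul, hLCH c hc, mul_one]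
    exact hr
  have hLx : 0 ≤ Lfun x := by
    have hcl : IsClosed {y : Matrix (Fin n) (Fin n) (Matrix (Fin m) (Fin m) ℂ) |
        0 ≤ Lfun y} := by
      have h : {y : Matrix (Fin n) (Fin n) (Matrix (Fin m) (Fin m) ℂ) | 0 ≤ Lfun y} =
          Lfun ⁻¹' Set.Ici 0 := rfl
      rw [h]
      exact isClosed_Ici.preimage Lfun_cont
    exact hcl.closure_subset ((closure_mono hD'L) hx)
  set R := Lfun x + 1 with hR
  have himg : IsCompact ((fun p : ℝ × Matrix (Fin n) (Fin n) (Matrix (Fin m) (Fin m) ℂ) =>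
      p.1 • p.2) '' (Set.Icc (0 : ℝ) R ×ˢ CH)) := by
    refine ((isCompact_Icc).prod hCHcomp).image ?_
    exact continuous_fst.smul continuous_snd
  have hsub : D' ∩ {y | Lfun y < R} ⊆
      (fun p : ℝ × Matrix (Fin n) (Fin n) (Matrix (Fin m) (Fin m) ℂ) => p.1 • p.2) ''
        (Set.Icc (0 : ℝ) R ×ˢ CH) := by
    rintro y ⟨⟨⟨r, c⟩, ⟨hr, hc⟩, rfl⟩, hy2⟩
    have hy2' : Lfun (r • c) < R := hy2
    rw [Lfun_rsmul, hLCH c hc, mul_one] at hy2'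
    exact ⟨⟨r, c⟩, ⟨⟨hr, hy2'.le⟩, hc⟩, rfl⟩
  have hxcl : x ∈ closure (D' ∩ {y | Lfun y < R}) := by
    rw [mem_closure_iff] at hx ⊢
    intro O hO hxO
    have hopen : IsOpen (O ∩ {y | Lfun y < R}) :=
      hO.inter (isOpen_lt Lfun_cont continuous_const)
    have hxmem : x ∈ O ∩ {y | Lfun y < R} := ⟨hxO, by simp [hR]⟩
    obtain ⟨z, hz1, hz2⟩ := hx _ hopen hxmem
    exact ⟨z, hz1.1, hz2, hz1.2⟩
  have hfinal := (closure_mono hsub) hxcl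
  rw [himg.isClosed.closure_eq] at hfinal
  obtain ⟨⟨r, c⟩, ⟨⟨hr0, _⟩, hc⟩, rfl⟩ := hfinal
  exact ⟨⟨r, c⟩, ⟨hr0, hc⟩, rfl⟩

end Main

section Limit

variable {n m : ℕ}

lemma Cmax_sub_Dmax (hn : 0 < n) (hm : 0 < m) :
    Cmax {X : Matrix (Fin m) (Fin m) ℂ | X.PosSemidef} (1 : Matrix (Fin m) (Fin m) ℂ) n ⊆
      Dmax {X : Matrix (Fin m) (Fin m) ℂ | X.PosSemidef} n := by
  intro M hM
  have hclosed := isClosed_Dmax hn hm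
  set e := eMat (1 : Matrix (Fin m) (Fin m) ℂ) n with he
  have htend : Filter.Tendsto
      (fun j : ℕ => ((1 / ((j : ℝ) + 1)) : ℝ) • e + M) Filter.atTop (nhds M) := by
    have h1 : Filter.Tendsto (fun j : ℕ => 1 / ((j : ℝ) + 1)) Filter.atTop (nhds 0) :=
      tendsto_one_div_add_atTop_nhds_zero_nat
    have h2 := h1.smul_const e
    rw [zero_smul] at h2
    have h3 := h2.add_const M
    rwa [zero_add] at h3
  apply hclosed.mem_of_tendsto htend
  apply Filter.Eventually.of_forall
  intro j
  have hpos : (0 : ℝ) < 1 / ((j : ℝ) + 1) := by positivity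
  have := hM _ hpos
  rwa [← rsmulW] at this

end Limit

section Forward

noncomputable def trFunc {k : ℕ} (a : Matrix (Fin k) (Fin k) ℂ) :
    Matrix (Fin k) (Fin k) ℂ →ₗ[ℂ] ℂ where
  toFun X := ∑ i, ∑ j, a i j * X i j
  map_add' X Y := by
    simp [Matrix.add_apply, mul_add, Finset.sum_add_distrib]
  map_smul' c X := by
    simp only [Matrix.smul_apply, smul_eq_mul, RingHom.id_apply, Finset.mul_sum]
    exact Finset.sum_congr rfl fun i _ => Finset.sum_congr rfl fun j _ => by ring

lemma choi_blockPSD {k : ℕ} :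
    (flattenC (Matrix.of fun i j : Fin k => Matrix.single i j (1 : ℂ))).PosSemidef := by
  have h : flattenC (Matrix.of fun i j : Fin k => Matrix.single i j (1 : ℂ)) =
      (Matrix.of fun (_ : Fin 1) (b : Fin k × Fin k) => if b.1 = b.2 then (1 : ℂ) else 0)ᴴ *
        (Matrix.of fun (_ : Fin 1) (b : Fin k × Fin k) => if b.1 = b.2 then (1 : ℂ) else 0) := by
    ext a b
    simp only [flattenC, Matrix.of_apply, Matrix.mul_apply, Matrix.conjTranspose_apply,
      Fin.sum_univ_one, Matrix.single]
    by_cases h1 : a.1 = a.2 <;> by_cases h2 : b.1 = b.2 <;>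
      simp [h1, h2, Matrix.of_apply] <;> tauto
  rw [h]
  exact Matrix.posSemidef_conjTranspose_mul_self _

lemma forward_repr {k m : ℕ}
    (φ : Matrix (Fin k) (Fin k) ℂ →ₗ[ℂ] Matrix (Fin m) (Fin m) ℂ)
    (h : (Matrix.of fun i j : Fin k => Matrix.single i j (1 : ℂ)).map φ ∈
      Dmax {X : Matrix (Fin m) (Fin m) ℂ | X.PosSemidef} k) :
    ∃ (q : ℕ) (s : Fin q → (Matrix (Fin k) (Fin k) ℂ →ₗ[ℂ] ℂ))
      (P : Fin q → Matrix (Fin m) (Fin m) ℂ),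
      (∀ l, ∀ X : Matrix (Fin k) (Fin k) ℂ, X.PosSemidef → 0 ≤ s l X) ∧
      (∀ l, (P l).PosSemidef) ∧
      (∀ X, φ X = ∑ l, s l X • P l) := by
  obtain ⟨q, a, v, ha, hv, hsum⟩ := h
  refine ⟨q, fun l => trFunc (a l), v, ?_, hv, ?_⟩
  · intro l X hX
    exact pos_pairing (ha l) hX
  · intro X
    have hE : ∀ i j, φ (Matrix.single i j 1) = ∑ l, a l i j • v l := by
      intro i j
      have h1 := congr_fun (congr_fun hsum i) j
      have h2 : ((Matrix.of fun i j : Fin k => Matrix.single i j (1 : ℂ)).map φ) i j =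
          φ (Matrix.single i j 1) := rfl
      rw [h2] at h1
      rw [h1, Matrix.sum_apply]
      rfl
    have step1 : φ X = ∑ i, ∑ j, X i j • φ (Matrix.single i j 1) := by
      conv_lhs => rw [Matrix.matrix_eq_sum_single X]
      rw [map_sum]
      refine Finset.sum_congr rfl fun i _ => ?_
      rw [map_sum]
      refine Finset.sum_congr rfl fun j _ => ?_
      have h3 : Matrix.single i j (X i j) = X i j • Matrix.single i j (1 : ℂ) := by
        rw [Matrix.smul_single, smul_eq_mul, mul_one]
      rw [h3, _root_.map_smul]
    rw [step1]
    have step2 : ∀ i j, X i j • φ (Matrix.single i j 1)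
        = ∑ l, (a l i j * X i j) • v l := by
      intro i j
      rw [hE i j, Finset.smul_sum]
      refine Finset.sum_congr rfl fun l _ => ?_
      rw [smul_smul, mul_comm]
    rw [Finset.sum_congr rfl fun i _ => Finset.sum_congr rfl fun j _ => step2 i j]
    have step3 : ∀ i, ∑ j, ∑ l, (a l i j * X i j) • v l
        = ∑ l, ∑ j, (a l i j * X i j) • v l := fun i => Finset.sum_comm
    rw [Finset.sum_congr rfl fun i _ => step3 i, Finset.sum_comm]
    refine Finset.sum_congr rfl fun l _ => ?_
    rw [show (trFunc (a l)) X = ∑ i, ∑ j, a l i j * X i j from rfl]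
    rw [Finset.sum_smul]
    refine Finset.sum_congr rfl fun i _ => ?_
    rw [Finset.sum_smul]

end Forward

section Reverse

lemma entrywise_psd {nn k : ℕ} (s : Matrix (Fin k) (Fin k) ℂ →ₗ[ℂ] ℂ)
    (hs : ∀ X : Matrix (Fin k) (Fin k) ℂ, X.PosSemidef → 0 ≤ s X)
    (M : Matrix (Fin nn) (Fin nn) (Matrix (Fin k) (Fin k) ℂ))
    (hM : (flattenC M).PosSemidef) :
    (Matrix.of fun p q => s (M p q)).PosSemidef := by
  apply posSemidef_of_dot
  intro lam
  set Y : Matrix (Fin k) (Fin k) ℂ :=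
    ∑ p, ∑ q, ((starRingEnd ℂ) (lam p) * lam q) • M p q with hY
  have hYij : ∀ i j, Y i j = ∑ p, ∑ q, ((starRingEnd ℂ) (lam p) * lam q) * M p q i j := by
    intro i j
    rw [hY, Matrix.sum_apply]
    refine Finset.sum_congr rfl fun p _ => ?_
    rw [Matrix.sum_apply]
    refine Finset.sum_congr rfl fun q _ => ?_
    rw [Matrix.smul_apply, smul_eq_mul]
  have hYpsd : Y.PosSemidef := by
    apply posSemidef_of_dot
    intro mu
    set w : Fin nn × Fin k → ℂ := fun pi => lam pi.1 * mu pi.2 with hw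
    have lhs1 : star mu ⬝ᵥ Y *ᵥ mu =
        ∑ p, ∑ i, ∑ q, ∑ j,
          (starRingEnd ℂ) (lam p) * (starRingEnd ℂ) (mu i) * lam q * mu j * M p q i j := by
      have c1 : star mu ⬝ᵥ Y *ᵥ mu = ∑ i, ∑ j, (starRingEnd ℂ) (mu i) * (Y i j * mu j) := by
        simp only [dotProduct, Matrix.mulVec, Pi.star_apply, RCLike.star_def,
          Finset.mul_sum]
      rw [c1]
      have c2 : ∀ i j, (starRingEnd ℂ) (mu i) * (Y i j * mu j) =
          ∑ p, ∑ q,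
            (starRingEnd ℂ) (lam p) * (starRingEnd ℂ) (mu i) * lam q * mu j * M p q i j := by
        intro i j
        rw [hYij i j, Finset.sum_mul, Finset.mul_sum]
        refine Finset.sum_congr rfl fun p _ => ?_
        rw [Finset.sum_mul, Finset.mul_sum]
        refine Finset.sum_congr rfl fun q _ => by ring
      rw [Finset.sum_congr rfl fun i _ => Finset.sum_congr rfl fun j _ => c2 i j]
      have c3 : ∀ i, (∑ j, ∑ p, ∑ q, (starRingEnd ℂ) (lam p) * (starRingEnd ℂ) (mu i) *
          lam q * mu j * M p q i j) = ∑ p, ∑ j, ∑ q, (starRingEnd ℂ) (lam p) *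
          (starRingEnd ℂ) (mu i) * lam q * mu j * M p q i j := fun i => Finset.sum_comm
      rw [Finset.sum_congr rfl fun i _ => c3 i]
      have c4 : ∀ i p, (∑ j, ∑ q, (starRingEnd ℂ) (lam p) * (starRingEnd ℂ) (mu i) *
          lam q * mu j * M p q i j) = ∑ q, ∑ j, (starRingEnd ℂ) (lam p) *
          (starRingEnd ℂ) (mu i) * lam q * mu j * M p q i j := fun i p => Finset.sum_comm
      rw [Finset.sum_congr rfl fun i _ => Finset.sum_congr rfl fun p _ => c4 i p]
      exact Finset.sum_comm
    have rhs1 : star w ⬝ᵥ flattenC M *ᵥ w =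
        ∑ p, ∑ i, ∑ q, ∑ j,
          (starRingEnd ℂ) (lam p) * (starRingEnd ℂ) (mu i) * lam q * mu j * M p q i j := by
      have d1 : star w ⬝ᵥ flattenC M *ᵥ w =
          ∑ pi : Fin nn × Fin k, (starRingEnd ℂ) (w pi) *
            ∑ qj : Fin nn × Fin k, M pi.1 qj.1 pi.2 qj.2 * w qj := by
        simp only [dotProduct, Matrix.mulVec, Pi.star_apply, RCLike.star_def,
          flattenC, Matrix.of_apply]
      rw [d1, Fintype.sum_prod_type]
      refine Finset.sum_congr rfl fun p _ => Finset.sum_congr rfl fun i _ => ?_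
      rw [Finset.mul_sum, Fintype.sum_prod_type]
      refine Finset.sum_congr rfl fun q _ => Finset.sum_congr rfl fun j _ => ?_
      simp only [hw, _root_.map_mul]
      ring
    rw [lhs1, ← rhs1]
    exact hM.dotProduct_mulVec_nonneg w
  have heq2 : star lam ⬝ᵥ (Matrix.of fun p q => s (M p q)) *ᵥ lam = s Y := by
    have hs1 : s Y = ∑ p, ∑ q, ((starRingEnd ℂ) (lam p) * lam q) * s (M p q) := by
      rw [hY, map_sum]
      refine Finset.sum_congr rfl fun p _ => ?_
      rw [map_sum]
      refine Finset.sum_congr rfl fun q _ => ?_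
      rw [LinearMap.map_smul, smul_eq_mul]
    rw [hs1]
    simp only [dotProduct, Matrix.mulVec, Pi.star_apply, Matrix.of_apply,
      RCLike.star_def, Finset.mul_sum]
    refine Finset.sum_congr rfl fun p _ => Finset.sum_congr rfl fun q _ => by ring
  rw [heq2]
  exact hs Y hYpsd

lemma smul_eMat_mem {m nn : ℕ} {r : ℝ} (hr : 0 ≤ r) :
    (r : ℂ) • eMat (1 : Matrix (Fin m) (Fin m) ℂ) nn ∈
      Dmax {X : Matrix (Fin m) (Fin m) ℂ | X.PosSemidef} nn := by
  have h : (r : ℂ) • eMat (1 : Matrix (Fin m) (Fin m) ℂ) nn =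
      eTensor ((r : ℂ) • (1 : Matrix (Fin nn) (Fin nn) ℂ)) (1 : Matrix (Fin m) (Fin m) ℂ) := by
    ext p q
    by_cases hpq : p = q <;>
      simp [eMat, eTensor, Matrix.one_apply, hpq]
  rw [h]
  exact eTensor_mem_Dmax (psd_smul hr Matrix.PosSemidef.one) Matrix.PosSemidef.one

lemma reverse_cp {k m : ℕ}
    (φ : Matrix (Fin k) (Fin k) ℂ →ₗ[ℂ] Matrix (Fin m) (Fin m) ℂ)
    (q : ℕ) (s : Fin q → (Matrix (Fin k) (Fin k) ℂ →ₗ[ℂ] ℂ))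
    (P : Fin q → Matrix (Fin m) (Fin m) ℂ)
    (hs : ∀ l, ∀ X : Matrix (Fin k) (Fin k) ℂ, X.PosSemidef → 0 ≤ s l X)
    (hP : ∀ l, (P l).PosSemidef)
    (hrep : ∀ X, φ X = ∑ l, s l X • P l)
    (nn : ℕ) (M : Matrix (Fin nn) (Fin nn) (Matrix (Fin k) (Fin k) ℂ))
    (hM : (flattenC M).PosSemidef) :
    M.map φ ∈ Cmax {X : Matrix (Fin m) (Fin m) ℂ | X.PosSemidef}
      (1 : Matrix (Fin m) (Fin m) ℂ) nn := by
  intro r hr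
  have h1 : M.map φ = ∑ l, eTensor (Matrix.of fun p q' => s l (M p q')) (P l) := by
    ext p q' i j
    simp only [Matrix.map_apply, hrep, Matrix.sum_apply, Matrix.smul_apply, eTensor,
      Matrix.of_apply, smul_eq_mul]
  apply Dmax_add (smul_eMat_mem hr.le)
  rw [h1]
  apply Dmax_sum
  intro l _
  exact eTensor_mem_Dmax (entrywise_psd (s l) (hs l) M hM) (hP l)

end Reverse

end AuxProofs

/-- A linear map `φ : M_k → M_m` is completely positive into
`OMAX(M_m)` iff `φ(X) = ∑_l s_l(X) P_l` for finitely many positive linear functionals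
`s_l` on `M_k` and positive matrices `P_l ∈ M_m⁺`. -/
theorem cp_into_OMAX_iff_sum_of_states
    (k m : ℕ) (φ : Matrix (Fin k) (Fin k) ℂ →ₗ[ℂ] Matrix (Fin m) (Fin m) ℂ) :
    (∀ (n : ℕ) (M : Matrix (Fin n) (Fin n) (Matrix (Fin k) (Fin k) ℂ)),
        BlockPSD M →
        M.map φ ∈ Cmax {X : Matrix (Fin m) (Fin m) ℂ | X.PosSemidef}
          (1 : Matrix (Fin m) (Fin m) ℂ) n) ↔
    ∃ (q : ℕ) (s : Fin q → (Matrix (Fin k) (Fin k) ℂ →ₗ[ℂ] ℂ))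
      (P : Fin q → Matrix (Fin m) (Fin m) ℂ),
      (∀ l, ∀ X : Matrix (Fin k) (Fin k) ℂ, X.PosSemidef → 0 ≤ s l X) ∧
      (∀ l, (P l).PosSemidef) ∧
      (∀ X, φ X = ∑ l, s l X • P l) := by
  constructor
  · intro h
    rcases Nat.eq_zero_or_pos k with hk | hk
    · subst hk
      refine ⟨0, Fin.elim0, Fin.elim0, fun l => l.elim0, fun l => l.elim0, fun X => ?_⟩
      have hX : X = 0 := by ext i j; exact i.elim0
      rw [hX, map_zero]
      simp
    rcases Nat.eq_zero_or_pos m with hm | hm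
    · subst hm
      refine ⟨0, Fin.elim0, Fin.elim0, fun l => l.elim0, fun l => l.elim0, fun X => ?_⟩
      ext i j
      exact i.elim0
    · have hchoi := h k (Matrix.of fun i j : Fin k => Matrix.single i j (1 : ℂ))
        choi_blockPSD
      exact forward_repr φ (Cmax_sub_Dmax hk hm hchoi)
  · rintro ⟨q, s, P, hs, hP, hrep⟩
    intro nn M hM
    exact reverse_cp φ q s P hs hP hrep nn M hM
end
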